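/- arXiv:2008.03347 — 7 statements merged into one kernel-verified Lean document; each statement's English description precedes it below -/
import Mathlib

section
/- Let M ∈ ℝ^{q×q} be symmetric with 0 ⪯ M ⪯ I_q (in the Loewner order) and let Q ∈ ℝ^{q×n} satisfy QᵀQ = I_n. Then det(I_n − QᵀMQ) ≥ ∏_{i=1}^{n} (1 − λ_i(M)), where λ_1(M) ≥ … ≥ λ_q(M) are the eigenvalues of M in nonincreasing order. -/
open Matrix Finset

private lemma exists_ne_zero_kernel {n : ℕ} {ι : Type*} [Fintype ι]
    (h : Fintype.card ι < n) (v : ι → (Fin n → ℝ)) :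
    ∃ y : Fin n → ℝ, y ≠ 0 ∧ ∀ j, v j ⬝ᵥ y = 0 := by
  let Φ : (Fin n → ℝ) →ₗ[ℝ] (ι → ℝ) :=
    { toFun := fun y j => v j ⬝ᵥ y
      map_add' := fun a b => by funext j; simp [dotProduct_add]
      map_smul' := fun c a => by funext j; simp [dotProduct_smul] }
  by_contra hc
  push_neg at hc
  have hker : LinearMap.ker Φ = ⊥ := by
    rw [LinearMap.ker_eq_bot']
    intro y hy
    by_contra hy0
    obtain ⟨j, hj⟩ := hc y hy0
    exact hj (congrFun hy j)
  have hinj := LinearMap.ker_eq_bot.mp hker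
  have hle := LinearMap.finrank_le_finrank_of_injective hinj
  simp [Module.finrank_pi, Module.finrank_fin_fun] at hle
  omega

private lemma quad_coords {m : Type*} [Fintype m] [DecidableEq m]
    {A : Matrix m m ℝ} (hA : A.IsHermitian) (x : m → ℝ) :
    x ⬝ᵥ (A *ᵥ x)
      = ∑ j, hA.eigenvalues j * ((star (hA.eigenvectorUnitary : Matrix m m ℝ) *ᵥ x) j) ^ 2 := by
  set U : Matrix m m ℝ := (hA.eigenvectorUnitary : Matrix m m ℝ) with hU
  have hspec : A = U * diagonal hA.eigenvalues * star U := by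
    simpa [hU] using hA.spectral_theorem
  have hstar : star U = Uᵀ := by
    rw [Matrix.star_eq_conjTranspose, conjTranspose_eq_transpose_of_trivial]
  have h := congrArg (fun C : Matrix m m ℝ => x ⬝ᵥ (C *ᵥ x)) hspec
  rw [h]
  calc x ⬝ᵥ ((U * diagonal hA.eigenvalues * star U) *ᵥ x)
      = (star U *ᵥ x) ⬝ᵥ (diagonal hA.eigenvalues *ᵥ (star U *ᵥ x)) := by
        rw [← Matrix.mulVec_mulVec, ← Matrix.mulVec_mulVec, dotProduct_mulVec x U,
          hstar, mulVec_transpose]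
    _ = ∑ j, hA.eigenvalues j * ((star U *ᵥ x) j) ^ 2 := by
        simp only [dotProduct, mulVec_diagonal]
        exact Finset.sum_congr rfl fun j _ => by ring

private lemma norm_coords {m : Type*} [Fintype m] [DecidableEq m]
    {A : Matrix m m ℝ} (hA : A.IsHermitian) (x : m → ℝ) :
    x ⬝ᵥ x = ∑ j, ((star (hA.eigenvectorUnitary : Matrix m m ℝ) *ᵥ x) j) ^ 2 := by
  set U : Matrix m m ℝ := (hA.eigenvectorUnitary : Matrix m m ℝ) with hU
  have hstar : star U = Uᵀ := by
    rw [Matrix.star_eq_conjTranspose, conjTranspose_eq_transpose_of_trivial]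
  have h1 : U * star U = 1 := Unitary.coe_mul_star_self _
  calc x ⬝ᵥ x = x ⬝ᵥ ((U * star U) *ᵥ x) := by rw [h1, one_mulVec]
    _ = (star U *ᵥ x) ⬝ᵥ (star U *ᵥ x) := by
        rw [← Matrix.mulVec_mulVec, dotProduct_mulVec x U, hstar, mulVec_transpose]
    _ = ∑ j, ((star U *ᵥ x) j) ^ 2 := by
        simp [dotProduct]
        exact Finset.sum_congr rfl fun j _ => (sq _).symm

/-- eigenvalues of `M` are at most 1 when `1 - M` is PSD -/
private lemma eigenvalues_le_one {m : Type*} [Fintype m] [DecidableEq m]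
    {M : Matrix m m ℝ} (hM : M.IsHermitian)
    (hM1 : ((1 : Matrix m m ℝ) - M).PosSemidef) (j : m) :
    hM.eigenvalues j ≤ 1 := by
  set U : Matrix m m ℝ := (hM.eigenvectorUnitary : Matrix m m ℝ) with hU
  set x : m → ℝ := U *ᵥ Pi.single j 1 with hx
  have hspec : M = U * diagonal hM.eigenvalues * star U := by
    simpa [hU] using hM.spectral_theorem
  have h1 : star U * U = 1 := Unitary.coe_star_mul_self _
  have hMU : M * U = U * diagonal hM.eigenvalues := by
    have h2 := congrArg (fun C : Matrix m m ℝ => C * U) hspec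
    rw [h2, Matrix.mul_assoc, Matrix.mul_assoc, h1, Matrix.mul_one]
  have hMx : M *ᵥ x = hM.eigenvalues j • x := by
    rw [hx, Matrix.mulVec_mulVec, hMU, ← Matrix.mulVec_mulVec, mulVec_single]
    have hsingle : (fun i => diagonal hM.eigenvalues i j * 1)
        = hM.eigenvalues j • (Pi.single j 1 : m → ℝ) := by
      funext i
      rcases eq_or_ne i j with rfl | hij
      · simp
      · simp [diagonal_apply_ne _ hij, Pi.single_apply, hij]
    rw [show MulOpposite.op (1:ℝ) • (diagonal hM.eigenvalues).col j = (fun i => diagonal hM.eigenvalues i j * 1) from by funext i; simp only [Pi.smul_apply, MulOpposite.smul_eq_mul_unop, MulOpposite.unop_op, Matrix.col_apply], hsingle, mulVec_smul]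
  have hxx : x ⬝ᵥ x = 1 := by
    rw [norm_coords hM x]
    rw [hx, ← hU, Matrix.mulVec_mulVec, h1, one_mulVec]
    simp [Pi.single_apply]
  have h0 := hM1.dotProduct_mulVec_nonneg x
  rw [sub_mulVec, one_mulVec, dotProduct_sub, hMx, dotProduct_smul] at h0
  simp only [star_trivial, hxx, smul_eq_mul, mul_one] at h0
  linarith

/-- Let `M ∈ ℝ^{q×q}` be symmetric with `0 ⪯ M ⪯ I_q` (Loewner order) and let
`Q ∈ ℝ^{q×n}` satisfy `QᵀQ = I_n`.  Then
`det(I_n − QᵀMQ) ≥ ∏_{i=1}^{n} (1 − λ_i(M))`,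
where `μ` lists the eigenvalues of `M` (with multiplicity) in nonincreasing order. -/
theorem det_one_sub_conj_ge_prod {q n : ℕ} (hnq : n ≤ q)
    (M : Matrix (Fin q) (Fin q) ℝ) (hM : M.IsHermitian)
    (hM0 : M.PosSemidef) (hM1 : ((1 : Matrix (Fin q) (Fin q) ℝ) - M).PosSemidef)
    (Q : Matrix (Fin q) (Fin n) ℝ) (hQ : Qᵀ * Q = 1)
    (μ : Fin q → ℝ) (hμanti : Antitone μ)
    (hμ : ∃ e : Equiv.Perm (Fin q), μ = hM.eigenvalues ∘ e) :
    ∏ i : Fin n, (1 - μ (Fin.castLE hnq i)) ≤ ((1 : Matrix (Fin n) (Fin n) ℝ) - Qᵀ * M * Q).det := by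
  obtain ⟨e, he⟩ := hμ
  set B : Matrix (Fin n) (Fin n) ℝ := Qᵀ * M * Q with hBdef
  have hB : B.IsHermitian := by
    have : Qᵀ = Qᴴ := (conjTranspose_eq_transpose_of_trivial Q).symm
    rw [hBdef, this]
    exact isHermitian_conjTranspose_mul_mul _ hM
  set ν : Fin n → ℝ := hB.eigenvalues with hν
  set W : Matrix (Fin n) (Fin n) ℝ := (hB.eigenvectorUnitary : Matrix (Fin n) (Fin n) ℝ) with hW
  set U : Matrix (Fin q) (Fin q) ℝ := (hM.eigenvectorUnitary : Matrix (Fin q) (Fin q) ℝ) with hU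
  -- sorting permutation for ν, decreasing
  set σ : Equiv.Perm (Fin n) := Tuple.sort (fun k => -ν k) with hσ
  have hνanti : ∀ a b : Fin n, a ≤ b → ν (σ b) ≤ ν (σ a) := by
    intro a b hab
    have := Tuple.monotone_sort (fun k => -ν k) hab
    simpa [hσ] using this
  -- key comparison
  have key : ∀ i : Fin n, ν (σ i) ≤ μ (Fin.castLE hnq i) := by
    intro i
    have hcard : Fintype.card (Fin i.val ⊕ Fin (n - 1 - i.val)) < n := by
      have := i.isLt
      simp only [Fintype.card_sum, Fintype.card_fin]
      omega
    set v : (Fin i.val ⊕ Fin (n - 1 - i.val)) → (Fin n → ℝ) := fun j =>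
      match j with
      | Sum.inl a => fun t => (star U * Q) (e ⟨a.val, by have := a.isLt; have := i.isLt; omega⟩) t
      | Sum.inr b => fun t => (star W) (σ ⟨i.val + 1 + b.val, by have := b.isLt; omega⟩) t
      with hv
    obtain ⟨y, hy0, hyc⟩ := exists_ne_zero_kernel hcard v
    set x : Fin q → ℝ := Q *ᵥ y with hx
    set z : Fin n → ℝ := star W *ᵥ y with hz
    set d : Fin q → ℝ := star U *ᵥ x with hd
    -- constraints
    have hzero1 : ∀ j : Fin q, j.val < i.val → d (e j) = 0 := by
      intro j hj
      have h := hyc (Sum.inl ⟨j.val, hj⟩)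
      have hidx : (⟨(j.val : ℕ), by have := i.isLt; omega⟩ : Fin q) = j := rfl
      rw [hv] at h
      simp only [hidx] at h
      rw [hd, hx, Matrix.mulVec_mulVec]
      exact h
    have hzero2 : ∀ k : Fin n, i < k → z (σ k) = 0 := by
      intro k hk
      have hk' : i.val < k.val := hk
      have h := hyc (Sum.inr ⟨k.val - i.val - 1, by have := k.isLt; omega⟩)
      have hidx : (⟨i.val + 1 + (k.val - i.val - 1), by have := k.isLt; omega⟩ : Fin n) = k := by
        apply Fin.ext; simp; omega
      rw [hv] at h
      simp only [hidx] at h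
      exact h
    -- quadratic identities
    have hq1 : y ⬝ᵥ (B *ᵥ y) = ∑ k, ν k * (z k) ^ 2 := quad_coords hB y
    have hy2 : y ⬝ᵥ y = ∑ k, (z k) ^ 2 := norm_coords hB y
    have hq2 : x ⬝ᵥ (M *ᵥ x) = ∑ j, hM.eigenvalues j * (d j) ^ 2 := quad_coords hM x
    have hx2 : x ⬝ᵥ x = ∑ j, (d j) ^ 2 := norm_coords hM x
    have hBM : y ⬝ᵥ (B *ᵥ y) = x ⬝ᵥ (M *ᵥ x) := by
      rw [hBdef, hx, ← Matrix.mulVec_mulVec, ← Matrix.mulVec_mulVec,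
        dotProduct_mulVec y Qᵀ, vecMul_transpose]
    have hxy : x ⬝ᵥ x = y ⬝ᵥ y := by
      have h' : y ⬝ᵥ ((Qᵀ * Q) *ᵥ y) = x ⬝ᵥ x := by
        rw [← Matrix.mulVec_mulVec, dotProduct_mulVec y Qᵀ, vecMul_transpose, hx]
      rw [← h', hQ, one_mulVec]
    have hypos : 0 < y ⬝ᵥ y := by
      have h0 : 0 ≤ y ⬝ᵥ y := Finset.sum_nonneg fun t _ => mul_self_nonneg _
      rcases h0.lt_or_eq with h | h
      · exact h
      · exact absurd (dotProduct_self_eq_zero.mp h.symm) hy0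
    -- lower bound
    have hlow : ν (σ i) * (y ⬝ᵥ y) ≤ y ⬝ᵥ (B *ᵥ y) := by
      rw [hq1, hy2, ← Equiv.sum_comp σ (fun k => ν k * (z k) ^ 2),
        ← Equiv.sum_comp σ (fun k => (z k) ^ 2), Finset.mul_sum]
      apply Finset.sum_le_sum
      intro k _
      rcases le_or_gt k i with hk | hk
      · exact mul_le_mul_of_nonneg_right (hνanti k i hk) (sq_nonneg _)
      · simp [hzero2 k hk]
    -- upper bound
    have hup : x ⬝ᵥ (M *ᵥ x) ≤ μ (Fin.castLE hnq i) * (x ⬝ᵥ x) := by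
      rw [hq2, hx2, ← Equiv.sum_comp e (fun j => hM.eigenvalues j * (d j) ^ 2),
        ← Equiv.sum_comp e (fun j => (d j) ^ 2), Finset.mul_sum]
      apply Finset.sum_le_sum
      intro j _
      rcases lt_or_ge j.val i.val with hj | hj
      · simp [hzero1 j hj]
      · have hle : μ j ≤ μ (Fin.castLE hnq i) := hμanti (by exact hj)
        have : hM.eigenvalues (e j) = μ j := by rw [he]; rfl
        rw [this]
        exact mul_le_mul_of_nonneg_right hle (sq_nonneg _)
    have := (hlow.trans (hBM.le.trans (hup.trans_eq (by rw [hxy]))))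
    exact le_of_mul_le_mul_right this hypos
  -- μ ≤ 1
  have hμ1 : ∀ j : Fin q, μ j ≤ 1 := fun j => by
    rw [he]; exact eigenvalues_le_one hM hM1 (e j)
  -- det computation
  have hdet : ((1 : Matrix (Fin n) (Fin n) ℝ) - B).det = ∏ k, (1 - ν (σ k)) := by
    have hspecB : B = W * diagonal ν * star W := by
      simpa [hW, hν] using hB.spectral_theorem
    have h1 : W * star W = 1 := Unitary.coe_mul_star_self _
    have h1' : (star W) * W = 1 := Unitary.coe_star_mul_self _
    have h2 : (1 : Matrix (Fin n) (Fin n) ℝ) - B = W * (1 - diagonal ν) * star W := by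
      rw [Matrix.mul_sub, Matrix.sub_mul, Matrix.mul_one, h1, ← hspecB]
    have h4 : W.det * (star W).det = 1 := by rw [← det_mul, h1, det_one]
    have h5 : ((1 : Matrix (Fin n) (Fin n) ℝ) - diagonal ν) = diagonal (fun k => 1 - ν k) := by
      rw [← diagonal_one, diagonal_sub]
    rw [h2, det_mul, det_mul, h5, det_diagonal]
    calc (W.det * ∏ k, (1 - ν k)) * (star W).det
        = (W.det * (star W).det) * ∏ k, (1 - ν k) := by ring
      _ = ∏ k, (1 - ν k) := by rw [h4, one_mul]
      _ = ∏ k, (1 - ν (σ k)) := (Equiv.prod_comp σ fun k => 1 - ν k).symm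
  rw [hdet]
  apply Finset.prod_le_prod
  · intro i _
    have := hμ1 (Fin.castLE hnq i); linarith
  · intro i _
    have := key i; linarith
end

section
/- Let M ∈ ℝ^{q×q} be symmetric with 0 ⪯ M ⪯ I_q and let 1 ≤ n ≤ q. Then the minimum of det(I_n − QᵀMQ) over all Q ∈ ℝ^{q×n} with QᵀQ = I_n is attained and equals ∏_{i=1}^{n} (1 − λ_i(M)), where λ_1(M) ≥ … ≥ λ_q(M) are the eigenvalues of M in nonincreasing order; in particular, when M is diagonal with nonincreasing diagonal entries, the minimum is attained at the matrix Q whose columns are the first n standard basis vectors of ℝ^q. -/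
open Matrix

/-- The `q×n` matrix whose columns are the first `n` standard basis vectors of `ℝ^q`. -/
noncomputable def stdCols (q n : ℕ) : Matrix (Fin q) (Fin n) ℝ :=
  Matrix.of fun i j => if (i : ℕ) = (j : ℕ) then (1 : ℝ) else 0

open Finset Equiv

lemma det_mul_expand {q n : ℕ} (C : Matrix (Fin n) (Fin q) ℝ) (A : Matrix (Fin q) (Fin n) ℝ) :
    det (C * A) = ∑ p : Fin n → Fin q, (∏ i, C i (p i)) * det (A.submatrix p id) := by
  have h1 : (C * A) = Matrix.of fun i => ∑ k : Fin q, C i k • (fun j => A k j) := by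
    ext i j
    simp [Matrix.mul_apply]
  rw [h1]
  have h2 : det (Matrix.of fun i => ∑ k : Fin q, C i k • (fun j => A k j))
      = (detRowAlternating : (Fin n → ℝ) [⋀^Fin n]→ₗ[ℝ] ℝ).toMultilinearMap
          (fun i => ∑ k : Fin q, C i k • (fun j => A k j)) := rfl
  rw [h2, MultilinearMap.map_sum]
  refine Finset.sum_congr rfl fun p _ => ?_
  rw [MultilinearMap.map_smul_univ]
  rfl

lemma perm_sum_inner {q n : ℕ} (A : Matrix (Fin q) (Fin n) ℝ) (c : Fin q → ℝ)
    (f : Fin n → Fin q) :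
    ∑ σ : Equiv.Perm (Fin n),
        (∏ i, c ((f ∘ σ) i) * A ((f ∘ σ) i) i) * det (A.submatrix (f ∘ σ) id)
      = (∏ i, c (f i)) * det (A.submatrix f id) ^ 2 := by
  have key : ∀ σ : Equiv.Perm (Fin n),
      (∏ i, c ((f ∘ σ) i) * A ((f ∘ σ) i) i) * det (A.submatrix (f ∘ σ) id)
        = (∏ i, c (f i)) * det (A.submatrix f id) *
            ((Equiv.Perm.sign σ : ℝ) * ∏ i, A (f (σ i)) i) := by
    intro σ
    have h1 : A.submatrix (f ∘ σ) id = (A.submatrix f id).submatrix σ id := rfl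
    have h2 : det (A.submatrix (f ∘ σ) id)
        = (Equiv.Perm.sign σ : ℝ) * det (A.submatrix f id) := by
      rw [h1, Matrix.det_permute]
    have h3 : (∏ i, c ((f ∘ σ) i)) = ∏ i, c (f i) := Equiv.prod_comp σ (fun i => c (f i))
    rw [Finset.prod_mul_distrib, h2, h3]
    ring_nf
    simp [Function.comp]
    ring
  rw [Finset.sum_congr rfl (fun σ _ => key σ), ← Finset.mul_sum]
  have h4 : ∑ σ : Equiv.Perm (Fin n), (Equiv.Perm.sign σ : ℝ) * ∏ i, A (f (σ i)) i
      = det (A.submatrix f id) := by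
    rw [Matrix.det_apply]
    refine Finset.sum_congr rfl fun σ _ => ?_
    simp [Matrix.submatrix_apply, Units.smul_def]
  rw [h4]; ring

lemma cauchy_binet_diag {q n : ℕ} (A : Matrix (Fin q) (Fin n) ℝ) (c : Fin q → ℝ) :
    det (Aᵀ * Matrix.diagonal c * A) =
      ∑ s ∈ (Finset.univ.powersetCard n : Finset (Finset (Fin q))).attach,
        (∏ k ∈ s.1, c k) *
          det (A.submatrix (s.1.orderEmbOfFin (Finset.mem_powersetCard_univ.mp s.2)) id) ^ 2 := by
  classical
  set F : (Fin n → Fin q) → ℝ :=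
    fun p => (∏ i, c (p i) * A (p i) i) * det (A.submatrix p id) with hF
  have e1 : det (Aᵀ * Matrix.diagonal c * A) = ∑ p : Fin n → Fin q, F p := by
    rw [det_mul_expand]
    refine Finset.sum_congr rfl fun p _ => ?_
    congr 1
    refine Finset.prod_congr rfl fun i _ => ?_
    rw [Matrix.mul_diagonal, Matrix.transpose_apply, mul_comm]
  have e2 : ∑ p : Fin n → Fin q, F p
      = ∑ p ∈ Finset.univ.filter (fun p : Fin n → Fin q => Function.Injective p), F p := by
    symm
    refine Finset.sum_filter_of_ne fun p _ hne => ?_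
    by_contra hinj
    obtain ⟨a, b, hab, hne'⟩ := Function.not_injective_iff.mp hinj
    have : det (A.submatrix p id) = 0 := by
      refine Matrix.det_zero_of_row_eq hne' ?_
      ext j
      simp [Matrix.submatrix_apply, hab]
    exact hne (by rw [hF]; simp [this])
  -- the grouped sum
  have e3 : ∀ s : {x // x ∈ (Finset.univ.powersetCard n : Finset (Finset (Fin q)))},
      (∏ k ∈ s.1, c k) *
          det (A.submatrix (s.1.orderEmbOfFin (Finset.mem_powersetCard_univ.mp s.2)) id) ^ 2
        = ∑ σ : Equiv.Perm (Fin n),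
            F ((s.1.orderEmbOfFin (Finset.mem_powersetCard_univ.mp s.2)) ∘ σ) := by
    intro s
    rw [hF]
    rw [perm_sum_inner A c (s.1.orderEmbOfFin (Finset.mem_powersetCard_univ.mp s.2))]
    congr 1
    have himg : Finset.image (⇑(s.1.orderEmbOfFin (Finset.mem_powersetCard_univ.mp s.2)))
        Finset.univ = s.1 := by
      apply Finset.coe_injective
      rw [Finset.coe_image, Finset.coe_univ, Set.image_univ, Finset.range_orderEmbOfFin]
    conv_lhs => rw [← himg]
    rw [Finset.prod_image (fun a _ b _ hab =>
      (s.1.orderEmbOfFin (Finset.mem_powersetCard_univ.mp s.2)).injective hab)]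
  rw [e1, e2, Finset.sum_congr rfl fun s _ => e3 s]
  rw [← Finset.sum_product']
  classical
  have himg : ∀ (s : Finset (Fin q)) (h : s.card = n),
      Finset.image (⇑(s.orderEmbOfFin h)) Finset.univ = s := by
    intro s h
    apply Finset.coe_injective
    rw [Finset.coe_image, Finset.coe_univ, Set.image_univ, Finset.range_orderEmbOfFin]
  have construct : ∀ p : Fin n → Fin q, Function.Injective p →
      ∃ (s : {y // y ∈ (Finset.univ.powersetCard n : Finset (Finset (Fin q)))})
        (σ : Equiv.Perm (Fin n)),
        (⇑(s.1.orderEmbOfFin (Finset.mem_powersetCard_univ.mp s.2))) ∘ ⇑σ = p := by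
    intro p hp
    have hcard : (Finset.image p Finset.univ).card = n := by
      rw [Finset.card_image_of_injective _ hp, Finset.card_univ, Fintype.card_fin]
    refine ⟨⟨Finset.image p Finset.univ, Finset.mem_powersetCard_univ.mpr hcard⟩, ?_⟩
    have hmem : ∀ i, p i ∈ Finset.image p Finset.univ :=
      fun i => Finset.mem_image_of_mem p (Finset.mem_univ i)
    set g : Fin n → Fin n :=
      fun i => ((Finset.image p Finset.univ).orderIsoOfFin hcard).symm ⟨p i, hmem i⟩ with hg
    have hginj : Function.Injective g := by
      intro a b hab
      apply hp
      have h2 := ((Finset.image p Finset.univ).orderIsoOfFin hcard).symm.injective hab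
      exact congrArg Subtype.val h2
    refine ⟨Equiv.ofBijective g (Finite.injective_iff_bijective.mp hginj), funext fun i => ?_⟩
    show (Finset.image p Finset.univ).orderEmbOfFin _ (g i) = p i
    rw [hg, ← Finset.coe_orderIsoOfFin_apply, OrderIso.apply_symm_apply]
  refine (Finset.sum_bij
    (i := fun (x : {y // y ∈ (Finset.univ.powersetCard n : Finset (Finset (Fin q)))}
        × Equiv.Perm (Fin n)) _ =>
      (⇑(x.1.1.orderEmbOfFin (Finset.mem_powersetCard_univ.mp x.1.2))) ∘ ⇑x.2)
    ?_ ?_ ?_ ?_).symm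
  · intro x _
    rw [Finset.mem_filter]
    exact ⟨Finset.mem_univ _,
      (x.1.1.orderEmbOfFin (Finset.mem_powersetCard_univ.mp x.1.2)).injective.comp
        x.2.injective⟩
  · intro x1 hx1 x2 hx2 hpq
    obtain ⟨⟨s₁, hs₁⟩, σ₁⟩ := x1
    obtain ⟨⟨s₂, hs₂⟩, σ₂⟩ := x2
    dsimp only at hpq
    have key1 : ∀ (s : Finset (Fin q)) (hs : s.card = n) (σ : Equiv.Perm (Fin n)),
        Finset.image (⇑(s.orderEmbOfFin hs) ∘ ⇑σ) Finset.univ = s := by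
      intro s hs σ
      rw [← Finset.image_image, Finset.image_univ_equiv, himg]
    have hs : s₁ = s₂ := by
      rw [← key1 s₁ (Finset.mem_powersetCard_univ.mp hs₁) σ₁,
        ← key1 s₂ (Finset.mem_powersetCard_univ.mp hs₂) σ₂, hpq]
    subst hs
    have hσ : σ₁ = σ₂ := by
      refine Equiv.ext fun i => ?_
      exact (s₁.orderEmbOfFin (Finset.mem_powersetCard_univ.mp hs₁)).injective
        (congrFun hpq i)
    subst hσ
    rfl
  · intro p hp
    obtain ⟨s, σ, hsig⟩ := construct p (Finset.mem_filter.mp hp).2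
    exact ⟨(s, σ), Finset.mem_product.mpr ⟨Finset.mem_attach _ _, Finset.mem_univ _⟩, hsig⟩
  · intro x _
    rfl

lemma sm_le {n q : ℕ} (f : Fin n → Fin q) (hf : StrictMono f) :
    ∀ (k : ℕ) (hk : k < n), k ≤ (f ⟨k, hk⟩ : ℕ) := by
  intro k
  induction k with
  | zero => intro _; exact Nat.zero_le _
  | succ m ih =>
    intro hk
    have hm : m < n := by omega
    have h1 : f ⟨m, hm⟩ < f ⟨m + 1, hk⟩ := hf (by simp [Fin.lt_def])
    have h2 := ih hm
    rw [Fin.lt_def] at h1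
    omega

lemma key_lower {q n : ℕ} (hnq : n ≤ q) (c : Fin q → ℝ) (hc0 : ∀ i, 0 ≤ c i)
    (hmono : Monotone c) (A : Matrix (Fin q) (Fin n) ℝ) (hA : Aᵀ * A = 1) :
    ∏ i : Fin n, c (Fin.castLE hnq i) ≤ det (Aᵀ * Matrix.diagonal c * A) := by
  classical
  have hsum1 : ∑ s ∈ (Finset.univ.powersetCard n : Finset (Finset (Fin q))).attach,
      det (A.submatrix (s.1.orderEmbOfFin (Finset.mem_powersetCard_univ.mp s.2)) id) ^ 2
        = 1 := by
    have h := cauchy_binet_diag A (fun _ => 1)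
    rw [Matrix.diagonal_one, Matrix.mul_one, hA, Matrix.det_one] at h
    rw [h]
    refine Finset.sum_congr rfl fun s _ => ?_
    simp
  rw [cauchy_binet_diag]
  calc ∏ i : Fin n, c (Fin.castLE hnq i)
      = ∑ s ∈ (Finset.univ.powersetCard n : Finset (Finset (Fin q))).attach,
          (∏ i : Fin n, c (Fin.castLE hnq i)) *
            det (A.submatrix (s.1.orderEmbOfFin (Finset.mem_powersetCard_univ.mp s.2)) id) ^ 2 := by
        rw [← Finset.mul_sum, hsum1, mul_one]
    _ ≤ _ := by
        refine Finset.sum_le_sum fun s _ => ?_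
        refine mul_le_mul_of_nonneg_right ?_ (sq_nonneg _)
        set e := s.1.orderEmbOfFin (Finset.mem_powersetCard_univ.mp s.2)
        have himg : Finset.image (⇑e) Finset.univ = s.1 := by
          apply Finset.coe_injective
          rw [Finset.coe_image, Finset.coe_univ, Set.image_univ, Finset.range_orderEmbOfFin]
        rw [← himg, Finset.prod_image (fun a _ b _ hab => e.injective hab)]
        refine Finset.prod_le_prod (fun i _ => hc0 _) fun i _ => ?_
        refine hmono ?_
        rw [Fin.le_def]
        exact sm_le (⇑e) e.strictMono (i : ℕ) i.isLt

-- entry formula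
lemma conj_diag_entry {q n : ℕ} (A : Matrix (Fin q) (Fin n) ℝ) (c : Fin q → ℝ) (i j : Fin n) :
    (Aᵀ * Matrix.diagonal c * A) i j = ∑ k, c k * A k i * A k j := by
  rw [Matrix.mul_apply]
  refine Finset.sum_congr rfl fun k _ => ?_
  rw [Matrix.mul_diagonal, Matrix.transpose_apply]
  ring

-- reindexing by a permutation
lemma conj_diag_reindex {q n : ℕ} (A : Matrix (Fin q) (Fin n) ℝ) (c : Fin q → ℝ)
    (e : Equiv.Perm (Fin q)) :
    (A.submatrix (⇑e) id)ᵀ * Matrix.diagonal c * (A.submatrix (⇑e) id)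
      = Aᵀ * Matrix.diagonal (c ∘ ⇑e.symm) * A := by
  ext i j
  rw [conj_diag_entry, conj_diag_entry]
  refine Fintype.sum_equiv e _ _ fun k => ?_
  simp

lemma one_sub_conj {q n : ℕ} (A : Matrix (Fin q) (Fin n) ℝ) (d : Fin q → ℝ)
    (hA : Aᵀ * A = 1) :
    (1 : Matrix (Fin n) (Fin n) ℝ) - Aᵀ * Matrix.diagonal d * A
      = Aᵀ * Matrix.diagonal (fun k => 1 - d k) * A := by
  have h : Matrix.diagonal (fun k : Fin q => (1 : ℝ) - d k)
      = 1 - Matrix.diagonal d := by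
    rw [← Matrix.diagonal_one, ← Matrix.diagonal_sub]
  rw [h, Matrix.mul_sub, Matrix.mul_one, Matrix.sub_mul, hA]

lemma eig_le_one {q : ℕ} {M : Matrix (Fin q) (Fin q) ℝ} (hM : M.IsHermitian)
    (hM1 : ((1 : Matrix (Fin q) (Fin q) ℝ) - M).PosSemidef) (i : Fin q) :
    hM.eigenvalues i ≤ 1 := by
  set v : Fin q → ℝ := ⇑(hM.eigenvectorBasis i) with hv
  have hev : M *ᵥ v = hM.eigenvalues i • v := hM.mulVec_eigenvectorBasis i
  have hnz : v ≠ 0 := by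
    intro h
    exact hM.eigenvectorBasis.orthonormal.ne_zero i (by ext k; exact congrFun h k)
  have h2 := hM1.dotProduct_mulVec_nonneg v
  rw [Matrix.sub_mulVec, Matrix.one_mulVec, hev] at h2
  rw [star_trivial, dotProduct_sub, dotProduct_smul, smul_eq_mul] at h2
  have hpos : 0 < v ⬝ᵥ v := by
    obtain ⟨k, hk⟩ := Function.ne_iff.mp hnz
    refine Finset.sum_pos' (fun m _ => mul_self_nonneg _) ⟨k, Finset.mem_univ _, ?_⟩
    exact mul_self_pos.mpr (by simpa using hk)
  nlinarith

lemma antitone_eq_of_multiset {k : ℕ} (f g : Fin k → ℝ) (hf : Antitone f) (hg : Antitone g)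
    (h : Multiset.map f Finset.univ.val = Multiset.map g Finset.univ.val) : f = g := by
  have huniv : (Finset.univ.val : Multiset (Fin k)) = ↑(List.finRange k) := by
    rw [Fin.univ_def]
  rw [huniv, Multiset.map_coe, Multiset.map_coe, Multiset.coe_eq_coe] at h
  have hsort : ∀ (u : Fin k → ℝ), Antitone u →
      List.Pairwise (fun a b : ℝ => b ≤ a) ((List.finRange k).map u) := by
    intro u hu
    rw [List.pairwise_map]
    exact (List.pairwise_lt_finRange k).imp fun hab => hu hab.le
  have heq : (List.finRange k).map f = (List.finRange k).map g :=
    List.Perm.eq_of_pairwise (fun a b _ _ h1 h2 => le_antisymm h2 h1) (hsort f hf) (hsort g hg) h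
  funext i
  have h1 : ((List.finRange k).map f)[(i : ℕ)]'(by simp)
      = ((List.finRange k).map g)[(i : ℕ)]'(by simp) := by
    simp only [heq]
  simpa [List.getElem_map, List.getElem_finRange] using h1

/-- Let `M ∈ ℝ^{q×q}` be symmetric with `0 ⪯ M ⪯ I_q` and `1 ≤ n ≤ q`.  Then the
minimum of `det(I_n − QᵀMQ)` over all `Q ∈ ℝ^{q×n}` with `QᵀQ = I_n` is attained and
equals `∏_{i=1}^{n} (1 − λ_i(M))`, where `μ` lists the eigenvalues of `M` in
nonincreasing order; in particular, when `M` is diagonal with nonincreasing diagonal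
entries, the minimum is attained at the matrix whose columns are the first `n`
standard basis vectors of `ℝ^q`. -/
theorem det_one_sub_conj_min {q n : ℕ} (hn1 : 1 ≤ n) (hnq : n ≤ q)
    (M : Matrix (Fin q) (Fin q) ℝ) (hM : M.IsHermitian)
    (hM0 : M.PosSemidef) (hM1 : ((1 : Matrix (Fin q) (Fin q) ℝ) - M).PosSemidef)
    (μ : Fin q → ℝ) (hμanti : Antitone μ)
    (hμ : ∃ e : Equiv.Perm (Fin q), μ = hM.eigenvalues ∘ e) :
    (∀ Q : Matrix (Fin q) (Fin n) ℝ, Qᵀ * Q = 1 →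
        ∏ i : Fin n, (1 - μ (Fin.castLE hnq i))
          ≤ ((1 : Matrix (Fin n) (Fin n) ℝ) - Qᵀ * M * Q).det) ∧
    (∃ Q : Matrix (Fin q) (Fin n) ℝ, Qᵀ * Q = 1 ∧
        ((1 : Matrix (Fin n) (Fin n) ℝ) - Qᵀ * M * Q).det
          = ∏ i : Fin n, (1 - μ (Fin.castLE hnq i))) ∧
    (((∀ i j : Fin q, i ≠ j → M i j = 0) ∧ Antitone fun i : Fin q => M i i) →
        (stdCols q n)ᵀ * stdCols q n = 1 ∧
        ((1 : Matrix (Fin n) (Fin n) ℝ) - (stdCols q n)ᵀ * M * stdCols q n).det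
          = ∏ i : Fin n, (1 - μ (Fin.castLE hnq i))) := by
  classical
  obtain ⟨e, he⟩ := hμ
  set W : Matrix (Fin q) (Fin q) ℝ := (hM.eigenvectorUnitary : Matrix (Fin q) (Fin q) ℝ)
    with hW
  have hstar : star W = Wᵀ := by
    rw [Matrix.star_eq_conjTranspose, Matrix.conjTranspose_eq_transpose_of_trivial]
  have hWWt : W * Wᵀ = 1 := by
    rw [← hstar]
    exact Matrix.mem_unitaryGroup_iff.mp hM.eigenvectorUnitary.2
  have hWtW : Wᵀ * W = 1 := by
    rw [← hstar]
    exact Matrix.mem_unitaryGroup_iff'.mp hM.eigenvectorUnitary.2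
  have hdiag : Wᵀ * M * W = Matrix.diagonal hM.eigenvalues := by
    have h := hM.conjStarAlgAut_star_eigenvectorUnitary
    simp only [Unitary.conjStarAlgAut_star_apply, Unitary.coe_star] at h
    rw [hstar] at h
    simpa using h
  have hspec : M = W * Matrix.diagonal hM.eigenvalues * Wᵀ := by
    have h := hM.spectral_theorem
    simp only [Unitary.conjStarAlgAut_apply, Unitary.coe_star] at h
    rw [hstar] at h
    simpa using h
  have hmu_le : ∀ k, μ k ≤ 1 := by
    intro k
    rw [he]
    exact eig_le_one hM hM1 (e k)
  have hc0 : ∀ k : Fin q, 0 ≤ 1 - μ k := fun k => by linarith [hmu_le k]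
  have hcmono : Monotone (fun k : Fin q => 1 - μ k) := by
    intro a b hab
    have := hμanti hab
    dsimp only
    linarith
  refine ⟨?_, ?_, ?_⟩
  · -- part 1 : lower bound
    intro Q hQ
    set A : Matrix (Fin q) (Fin n) ℝ := Wᵀ * Q with hA
    have hAA : Aᵀ * A = 1 := by
      rw [hA, Matrix.transpose_mul, Matrix.transpose_transpose]
      calc Qᵀ * W * (Wᵀ * Q) = Qᵀ * (W * Wᵀ) * Q := by
            simp only [Matrix.mul_assoc]
        _ = 1 := by rw [hWWt, Matrix.mul_one, hQ]
    have hQMQ : Qᵀ * M * Q = Aᵀ * Matrix.diagonal hM.eigenvalues * A := by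
      rw [hA, Matrix.transpose_mul, Matrix.transpose_transpose]
      conv_lhs => rw [hspec]
      simp only [Matrix.mul_assoc]
    have hlam : hM.eigenvalues = μ ∘ ⇑e.symm := by
      funext k
      rw [he]
      simp
    set B : Matrix (Fin q) (Fin n) ℝ := A.submatrix (⇑e) id with hB
    have hBB : Bᵀ * B = 1 := by
      have h1 : Bᵀ * B = Bᵀ * Matrix.diagonal (fun _ : Fin q => (1 : ℝ)) * B := by
        rw [show Matrix.diagonal (fun _ : Fin q => (1 : ℝ)) = (1 : Matrix _ _ ℝ) from
          Matrix.diagonal_one, Matrix.mul_one]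
      rw [h1, hB, conj_diag_reindex]
      rw [show ((fun _ : Fin q => (1 : ℝ)) ∘ ⇑e.symm) = fun _ : Fin q => (1 : ℝ) from rfl]
      rw [show Matrix.diagonal (fun _ : Fin q => (1 : ℝ)) = (1 : Matrix _ _ ℝ) from
        Matrix.diagonal_one, Matrix.mul_one, hAA]
    have hconj : Qᵀ * M * Q = Bᵀ * Matrix.diagonal μ * B := by
      rw [hQMQ, hlam, hB]
      exact (conj_diag_reindex A μ e).symm
    have hfinal : (1 : Matrix (Fin n) (Fin n) ℝ) - Qᵀ * M * Q
        = Bᵀ * Matrix.diagonal (fun k => 1 - μ k) * B := by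
      rw [hconj, one_sub_conj B μ hBB]
    rw [hfinal]
    exact key_lower hnq (fun k => 1 - μ k) hc0 hcmono B hBB
  · -- part 2 : attained
    set f : Fin n → Fin q := fun j => e (Fin.castLE hnq j) with hf
    have hfinj : Function.Injective f := by
      intro a b hab
      exact Fin.castLE_injective hnq (e.injective hab)
    set Q : Matrix (Fin q) (Fin n) ℝ := W.submatrix id f with hQdef
    have sub_conj : ∀ X : Matrix (Fin q) (Fin q) ℝ,
        (W.submatrix id f)ᵀ * X * (W.submatrix id f) = (Wᵀ * X * W).submatrix f f := by
      intro X
      ext i j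
      simp [Matrix.mul_apply, Finset.sum_mul]
    have hQQ : Qᵀ * Q = 1 := by
      have h0 : Qᵀ * Q = Qᵀ * (1 : Matrix (Fin q) (Fin q) ℝ) * Q := by rw [Matrix.mul_one]
      rw [hQdef] at h0 ⊢
      rw [h0, sub_conj 1, Matrix.mul_one, hWtW]
      rw [show (1 : Matrix (Fin q) (Fin q) ℝ) = Matrix.diagonal (fun _ => (1:ℝ)) from
        Matrix.diagonal_one.symm, Matrix.submatrix_diagonal _ f hfinj]
      exact Matrix.diagonal_one
    have hQMQd : Qᵀ * M * Q = Matrix.diagonal (fun j : Fin n => μ (Fin.castLE hnq j)) := by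
      rw [hQdef, sub_conj M, hdiag, Matrix.submatrix_diagonal _ f hfinj]
      congr 1
      funext j
      rw [he]
      rfl
    refine ⟨Q, hQQ, ?_⟩
    rw [hQMQd]
    rw [show (1 : Matrix (Fin n) (Fin n) ℝ)
        - Matrix.diagonal (fun j : Fin n => μ (Fin.castLE hnq j))
        = Matrix.diagonal (fun j : Fin n => 1 - μ (Fin.castLE hnq j)) from by
      rw [← Matrix.diagonal_one, ← Matrix.diagonal_sub]]
    rw [Matrix.det_diagonal]
  · -- part 3 : diagonal case
    rintro ⟨hoff, hanti⟩
    have hSe : ∀ (i : Fin q) (j : Fin n),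
        stdCols q n i j = if i = Fin.castLE hnq j then 1 else 0 := by
      intro i j
      show (if (i : ℕ) = (j : ℕ) then (1:ℝ) else 0) = _
      congr 1
      simp [Fin.ext_iff]
    have hS1 : (stdCols q n)ᵀ * stdCols q n = 1 := by
      ext j k
      simp only [Matrix.mul_apply, Matrix.transpose_apply, hSe]
      rw [Finset.sum_eq_single (Fin.castLE hnq j)]
      · by_cases h : j = k
        · subst h; simp
        · have : Fin.castLE hnq j ≠ Fin.castLE hnq k := fun hc => h (Fin.castLE_injective hnq hc)
          simp [this, Matrix.one_apply, h]
      · intro b _ hb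
        simp [hb]
      · intro h
        exact absurd (Finset.mem_univ _) h
    refine ⟨hS1, ?_⟩
    have hSMS : (stdCols q n)ᵀ * M * stdCols q n
        = Matrix.diagonal (fun j : Fin n => M (Fin.castLE hnq j) (Fin.castLE hnq j)) := by
      ext j k
      have hentry : ((stdCols q n)ᵀ * M * stdCols q n) j k
          = M (Fin.castLE hnq j) (Fin.castLE hnq k) := by
        have step1 : ((stdCols q n)ᵀ * M * stdCols q n) j k
            = ∑ i' : Fin q, (∑ i : Fin q, stdCols q n i j * M i i') * stdCols q n i' k := by
          simp only [Matrix.mul_apply, Matrix.transpose_apply]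
        have inner : ∀ i' : Fin q, (∑ i : Fin q, stdCols q n i j * M i i')
            = M (Fin.castLE hnq j) i' := by
          intro i'
          rw [Finset.sum_eq_single (Fin.castLE hnq j)]
          · rw [hSe]; simp
          · intro b _ hb; rw [hSe]; simp [hb]
          · intro h; exact absurd (Finset.mem_univ _) h
        rw [step1, Finset.sum_congr rfl fun i' _ => by rw [inner i']]
        rw [Finset.sum_eq_single (Fin.castLE hnq k)]
        · rw [hSe]; simp
        · intro b _ hb; rw [hSe]; simp [hb]
        · intro h; exact absurd (Finset.mem_univ _) h
      rw [hentry]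
      by_cases h : j = k
      · subst h; simp
      · rw [Matrix.diagonal_apply_ne _ h]
        exact hoff _ _ (fun hc => h (Fin.castLE_injective hnq hc))
    -- identify diagonal entries with μ
    have hdets : ∀ t : ℝ, ∏ i, (t - M i i) = ∏ i, (t - μ i) := by
      intro t
      have hMdg : M = Matrix.diagonal (fun i => M i i) := by
        ext i j
        by_cases h : i = j
        · subst h; simp
        · rw [Matrix.diagonal_apply_ne _ h]; exact hoff i j h
      have h1 : Matrix.det (t • (1 : Matrix (Fin q) (Fin q) ℝ) - M) = ∏ i, (t - M i i) := by
        conv_lhs => rw [hMdg]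
        rw [Matrix.smul_one_eq_diagonal, Matrix.diagonal_sub, Matrix.det_diagonal]
      have h2 : Matrix.det (t • (1 : Matrix (Fin q) (Fin q) ℝ) - M)
          = ∏ i, (t - hM.eigenvalues i) := by
        have hconj : t • (1 : Matrix (Fin q) (Fin q) ℝ) - M
            = W * (t • (1 : Matrix (Fin q) (Fin q) ℝ) - Matrix.diagonal hM.eigenvalues) * Wᵀ := by
          rw [Matrix.mul_sub, Matrix.sub_mul]
          have hb1 : t • (1 : Matrix (Fin q) (Fin q) ℝ)
              = W * (t • (1 : Matrix (Fin q) (Fin q) ℝ)) * Wᵀ := by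
            rw [mul_smul_comm, smul_mul_assoc, Matrix.mul_one, hWWt]
          rw [← hb1]
          conv_lhs => rw [hspec]
        rw [hconj, Matrix.det_mul, Matrix.det_mul, Matrix.det_transpose]
        have hdW : Matrix.det W * Matrix.det W = 1 := by
          have hdt : Matrix.det W * Matrix.det W = Matrix.det W * Matrix.det Wᵀ := by
            rw [Matrix.det_transpose]
          rw [hdt, ← Matrix.det_mul, hWWt, Matrix.det_one]
        rw [Matrix.smul_one_eq_diagonal, Matrix.diagonal_sub, Matrix.det_diagonal]
        calc Matrix.det W * (∏ i, (t - hM.eigenvalues i)) * Matrix.det W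
            = (Matrix.det W * Matrix.det W) * ∏ i, (t - hM.eigenvalues i) := by ring
          _ = ∏ i, (t - hM.eigenvalues i) := by rw [hdW, one_mul]
      have h3 : ∏ i, (t - hM.eigenvalues i) = ∏ i, (t - μ i) := by
        rw [he]
        exact (Equiv.prod_comp e (fun k => t - hM.eigenvalues k)).symm
      rw [← h1, h2, h3]
    have hpoly : ∏ i, (Polynomial.X - Polynomial.C (M i i))
        = ∏ i : Fin q, (Polynomial.X - Polynomial.C (μ i)) := by
      apply Polynomial.funext
      intro t
      simpa [Polynomial.eval_prod] using hdets t
    have h4 : Multiset.map (fun i : Fin q => M i i) Finset.univ.val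
        = Multiset.map μ Finset.univ.val := by
      have hr := congrArg Polynomial.roots hpoly
      have hmm1 : Multiset.map (fun i : Fin q => Polynomial.X - Polynomial.C (M i i))
          Finset.univ.val = Multiset.map (fun a : ℝ => Polynomial.X - Polynomial.C a)
            (Multiset.map (fun i : Fin q => M i i) Finset.univ.val) :=
        (Multiset.map_map (fun a : ℝ => Polynomial.X - Polynomial.C a)
          (fun i : Fin q => M i i) Finset.univ.val).symm
      have hmm2 : Multiset.map (fun i : Fin q => Polynomial.X - Polynomial.C (μ i))
          Finset.univ.val = Multiset.map (fun a : ℝ => Polynomial.X - Polynomial.C a)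
            (Multiset.map μ Finset.univ.val) :=
        (Multiset.map_map (fun a : ℝ => Polynomial.X - Polynomial.C a) μ Finset.univ.val).symm
      rwa [Finset.prod_eq_multiset_prod, Finset.prod_eq_multiset_prod, hmm1, hmm2,
        Polynomial.roots_multiset_prod_X_sub_C, Polynomial.roots_multiset_prod_X_sub_C] at hr
    have hdmu : (fun i : Fin q => M i i) = μ :=
      antitone_eq_of_multiset _ _ hanti hμanti h4
    rw [hSMS]
    rw [show (1 : Matrix (Fin n) (Fin n) ℝ)
        - Matrix.diagonal (fun j : Fin n => M (Fin.castLE hnq j) (Fin.castLE hnq j))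
        = Matrix.diagonal (fun j : Fin n => 1 - M (Fin.castLE hnq j) (Fin.castLE hnq j)) from by
      rw [← Matrix.diagonal_one, ← Matrix.diagonal_sub]]
    rw [Matrix.det_diagonal]
    refine Finset.prod_congr rfl fun j _ => ?_
    rw [show M (Fin.castLE hnq j) (Fin.castLE hnq j) = μ (Fin.castLE hnq j) from
      congrFun hdmu _]
end

section
/- Gaussian covariance maximum-likelihood step: Let E ∈ ℝ^{m×m} be symmetric positive definite and let N > 0 be a real number. Then the function Σ ↦ N·log det(Σ) + tr(Σ⁻¹E), defined on symmetric positive definite matrices Σ ∈ ℝ^{m×m}, attains its unique minimum at Σ = E/N, and the minimum value is N·log det(E/N) + m·N. -/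
open Matrix

section GaussianAux

variable {m : ℕ}

private lemma gaussAux_smul_posDef {c : ℝ} (hc : 0 < c) {A : Matrix (Fin m) (Fin m) ℝ}
    (hA : A.PosDef) : (c • A).PosDef := by
  refine Matrix.PosDef.of_dotProduct_mulVec_pos ?_ ?_
  · unfold Matrix.IsHermitian
    rw [conjTranspose_smul, hA.1.eq]
    simp
  · intro x hx
    simpa [smul_mulVec, dotProduct_smul] using mul_pos hc (hA.dotProduct_mulVec_pos hx)

private lemma gaussAux_conj_posDef {A T : Matrix (Fin m) (Fin m) ℝ} (hA : A.PosDef)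
    (hT : IsUnit T.det) : (Tᴴ * A * T).PosDef := by
  refine Matrix.PosDef.of_dotProduct_mulVec_pos ?_ ?_
  · unfold Matrix.IsHermitian
    rw [conjTranspose_mul, conjTranspose_mul, hA.1.eq, conjTranspose_conjTranspose, mul_assoc]
  · intro x hx
    have hTx : T *ᵥ x ≠ 0 := by
      intro h
      apply hx
      have := congrArg (T⁻¹ *ᵥ ·) h
      simpa [mulVec_mulVec, Matrix.nonsing_inv_mul T hT] using this
    have h2 := hA.dotProduct_mulVec_pos hTx
    have heq : star x ⬝ᵥ (Tᴴ * A * T) *ᵥ x = star (T *ᵥ x) ⬝ᵥ A *ᵥ (T *ᵥ x) := by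
      rw [star_mulVec, ← mulVec_mulVec, ← mulVec_mulVec, dotProduct_mulVec, ← star_mulVec]
    rwa [heq]

private lemma gaussAux_trace_eq_sum {A : Matrix (Fin m) (Fin m) ℝ} (hA : A.IsHermitian) :
    A.trace = ∑ i, hA.eigenvalues i := by
  conv_lhs => rw [hA.spectral_theorem, Unitary.conjStarAlgAut_apply]
  rw [trace_mul_cycle]
  simp [Matrix.mem_unitaryGroup_iff'.mp (hA.eigenvectorUnitary).2, trace_diagonal]

private lemma gaussAux_eq_one {A : Matrix (Fin m) (Fin m) ℝ} (hA : A.IsHermitian)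
    (h : ∀ i, hA.eigenvalues i = 1) : A = 1 := by
  have hd : (RCLike.ofReal ∘ hA.eigenvalues : Fin m → ℝ) = fun _ => 1 := by
    funext i; simp [h i]
  conv_lhs => rw [hA.spectral_theorem, hd]
  rw [diagonal_one, Unitary.conjStarAlgAut_apply, mul_one]
  exact Matrix.mem_unitaryGroup_iff.mp (hA.eigenvectorUnitary).2

end GaussianAux

/-- **Gaussian covariance maximum-likelihood step.**
Let `E ∈ ℝ^{m×m}` be symmetric positive definite and `N > 0` a real number.  Then
`Σ ↦ N·log det(Σ) + tr(Σ⁻¹E)`, defined on symmetric positive definite `Σ`, attains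
its unique minimum at `Σ = E/N = N⁻¹ • E`, and the minimum value is
`N·log det(E/N) + m·N`. -/
theorem gaussian_covariance_ml_step {m : ℕ}
    (E : Matrix (Fin m) (Fin m) ℝ) (hE : E.PosDef) (N : ℝ) (hN : 0 < N) :
    ((N⁻¹ • E : Matrix (Fin m) (Fin m) ℝ)).PosDef ∧
    (N * Real.log (N⁻¹ • E : Matrix (Fin m) (Fin m) ℝ).det
        + ((N⁻¹ • E : Matrix (Fin m) (Fin m) ℝ)⁻¹ * E).trace
      = N * Real.log (N⁻¹ • E : Matrix (Fin m) (Fin m) ℝ).det + m * N) ∧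
    ∀ S : Matrix (Fin m) (Fin m) ℝ, S.PosDef →
      (N * Real.log (N⁻¹ • E : Matrix (Fin m) (Fin m) ℝ).det
          + ((N⁻¹ • E : Matrix (Fin m) (Fin m) ℝ)⁻¹ * E).trace
        ≤ N * Real.log S.det + (S⁻¹ * E).trace) ∧
      (S ≠ N⁻¹ • E →
        N * Real.log (N⁻¹ • E : Matrix (Fin m) (Fin m) ℝ).det
            + ((N⁻¹ • E : Matrix (Fin m) (Fin m) ℝ)⁻¹ * E).trace
          < N * Real.log S.det + (S⁻¹ * E).trace) := by
  have hEdet : IsUnit E.det := hE.det_pos.ne'.isUnit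
  set C0 : Matrix (Fin m) (Fin m) ℝ := N⁻¹ • E with hC0def
  have hC0 : C0.PosDef := gaussAux_smul_posDef (inv_pos.mpr hN) hE
  have h1 : C0 * (N • E⁻¹) = 1 := by
    rw [hC0def, Matrix.smul_mul, Matrix.mul_smul, smul_smul, inv_mul_cancel₀ hN.ne',
      one_smul, Matrix.mul_nonsing_inv E hEdet]
  have hinv : C0⁻¹ * E = N • (1 : Matrix (Fin m) (Fin m) ℝ) := by
    rw [Matrix.inv_eq_right_inv h1, Matrix.smul_mul, Matrix.nonsing_inv_mul E hEdet]
  have htrC0 : (C0⁻¹ * E).trace = N * m := by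
    rw [hinv, trace_smul, trace_one]
    simp
  set T : Matrix (Fin m) (Fin m) ℝ := open scoped MatrixOrder in CFC.sqrt C0 with hT
  have hTmul : T * T = C0 := open scoped MatrixOrder in CFC.sqrt_mul_sqrt_self C0 hC0.posSemidef.nonneg
  have hTh : T.IsHermitian := open scoped MatrixOrder in (CFC.sqrt_nonneg C0).posSemidef.1
  have hTdet : IsUnit T.det := by
    have hden : T.det * T.det = C0.det := by rw [← det_mul, hTmul]
    have h0 : T.det ≠ 0 := by
      intro h; rw [h, mul_zero] at hden; exact hC0.det_pos.ne hden
    exact h0.isUnit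
  have hEN : E = N • C0 := by rw [hC0def, smul_smul, mul_inv_cancel₀ hN.ne', one_smul]
  refine ⟨hC0, by rw [htrC0]; ring, ?_⟩
  intro S hS
  have hSdet : IsUnit S.det := hS.det_pos.ne'.isUnit
  set B : Matrix (Fin m) (Fin m) ℝ := T * S⁻¹ * T with hBdef
  have hB : B.PosDef := by
    have := gaussAux_conj_posDef hS.inv hTdet
    rwa [hTh.eq] at this
  set μ : Fin m → ℝ := hB.1.eigenvalues with hμ
  have hμpos : ∀ i, 0 < μ i := hB.eigenvalues_pos
  -- the key identity
  have key : N * Real.log S.det + (S⁻¹ * E).trace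
      = N * Real.log C0.det + N * m + N * ∑ i, (μ i - Real.log (μ i) - 1) := by
    have htr : (S⁻¹ * E).trace = N * B.trace := by
      rw [hEN, ← hTmul, Matrix.mul_smul, trace_smul, hBdef, ← mul_assoc,
        Matrix.trace_mul_comm (S⁻¹ * T) T, ← mul_assoc]
      simp
    have hdet : S.det * B.det = C0.det := by
      have hSinv : S⁻¹.det = (S.det)⁻¹ := by
        rw [Matrix.det_nonsing_inv, Ring.inverse_eq_inv']
      rw [hBdef, det_mul, det_mul, hSinv, ← hTmul, det_mul]
      field_simp [hS.det_pos.ne']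
    have hlog : Real.log S.det = Real.log C0.det - Real.log B.det := by
      rw [← hdet, Real.log_mul hS.det_pos.ne' hB.det_pos.ne']
      ring
    have hBtr : B.trace = ∑ i, μ i := gaussAux_trace_eq_sum hB.1
    have hBlog : Real.log B.det = ∑ i, Real.log (μ i) := by
      rw [hB.1.det_eq_prod_eigenvalues, Real.log_prod]
      · rfl
      · exact fun i _ => (hμpos i).ne'
    rw [htr, hlog, hBtr, hBlog, Finset.sum_sub_distrib, Finset.sum_sub_distrib,
      Finset.sum_const, Finset.card_univ, Fintype.card_fin, nsmul_eq_mul, mul_one]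
    ring
  have hterm : ∀ i, 0 ≤ μ i - Real.log (μ i) - 1 := by
    intro i
    have := Real.log_le_sub_one_of_pos (hμpos i)
    linarith
  constructor
  · rw [key, htrC0]
    have : 0 ≤ N * ∑ i, (μ i - Real.log (μ i) - 1) :=
      mul_nonneg hN.le (Finset.sum_nonneg fun i _ => hterm i)
    linarith
  · intro hSne
    -- there is an eigenvalue ≠ 1
    have hex : ∃ i, μ i ≠ 1 := by
      by_contra hall
      push_neg at hall
      have hB1 : B = 1 := gaussAux_eq_one hB.1 hall
      apply hSne
      -- from T * S⁻¹ * T = 1 deduce S = C0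
      have hB1' : T * S⁻¹ * T = 1 := by rw [← hBdef]; exact hB1
      have hTinv : T⁻¹ = T * S⁻¹ := Matrix.inv_eq_left_inv hB1'
      have hSinv : S⁻¹ = T⁻¹ * T⁻¹ := by
        calc S⁻¹ = T⁻¹ * (T * S⁻¹) := by
              rw [← mul_assoc, Matrix.nonsing_inv_mul T hTdet, one_mul]
          _ = T⁻¹ * T⁻¹ := by rw [← hTinv]
      have : S = T * T := by
        have := congrArg (fun M => M⁻¹) hSinv
        simpa [Matrix.mul_inv_rev, Matrix.nonsing_inv_nonsing_inv T hTdet,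
          Matrix.nonsing_inv_nonsing_inv S hSdet] using this
      rw [this, hTmul]
    obtain ⟨i, hi⟩ := hex
    have hsum : 0 < ∑ j, (μ j - Real.log (μ j) - 1) := by
      have hstrict : 0 < μ i - Real.log (μ i) - 1 := by
        have := Real.log_lt_sub_one_of_pos (hμpos i) hi
        linarith
      exact Finset.sum_pos' (fun j _ => hterm j) ⟨i, Finset.mem_univ i, hstrict⟩
    rw [key, htrC0]
    have : 0 < N * ∑ j, (μ j - Real.log (μ j) - 1) := mul_pos hN hsum
    linarith
end

section
/- Concentrated Gaussian log-likelihood: Let Y ∈ ℝ^{m×N} with columns y_1,…,y_N and Z ∈ ℝ^{q×N} with columns z_1,…,z_N, with ZZᵀ invertible. Set Ĥ = YZᵀ(ZZᵀ)⁻¹ and Σ̂ = (1/N)·(Y − ĤZ)(Y − ĤZ)ᵀ = (1/N)·YYᵀ − (1/N)·Ĥ(ZZᵀ)Ĥᵀ, and assume Σ̂ is positive definite. Then the pair (Ĥ, Σ̂) minimizes the Gaussian negative log-likelihood f over all H ∈ ℝ^{m×q} and symmetric positive definite Σ ∈ ℝ^{m×m}, and the minimum value is f(Ĥ, Σ̂)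 = (mN/2)(log(2π) + 1) + (N/2)·log det(Σ̂). -/
open Matrix

/-- The Gaussian negative log-likelihood
`f(H,Σ) = (mN/2)·log(2π) + (N/2)·log det(Σ) + (1/2)·∑_t (y_t − Hz_t)ᵀ Σ⁻¹ (y_t − Hz_t)`,
where `y_t` (resp. `z_t`) is the `t`-th column of `Y` (resp. `Z`). -/
noncomputable def negLogLik {m q N : ℕ}
    (Y : Matrix (Fin m) (Fin N) ℝ) (Z : Matrix (Fin q) (Fin N) ℝ)
    (H : Matrix (Fin m) (Fin q) ℝ) (S : Matrix (Fin m) (Fin m) ℝ) : ℝ :=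
  ((m : ℝ) * N / 2) * Real.log (2 * Real.pi) + ((N : ℝ) / 2) * Real.log S.det
    + (1 / 2) * ∑ t : Fin N, (Yᵀ t - H *ᵥ Zᵀ t) ⬝ᵥ (S⁻¹ *ᵥ (Yᵀ t - H *ᵥ Zᵀ t))

namespace ConcAux

variable {n : ℕ}

open scoped MatrixOrder

lemma trace_eq_sum_eig {A : Matrix (Fin n) (Fin n) ℝ} (hA : A.IsHermitian) :
    A.trace = ∑ i, hA.eigenvalues i := by
  conv_lhs => rw [hA.spectral_theorem, Unitary.conjStarAlgAut_apply]
  rw [trace_mul_cycle]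
  rw [show star (hA.eigenvectorUnitary : Matrix (Fin n) (Fin n) ℝ) *
      (hA.eigenvectorUnitary : Matrix (Fin n) (Fin n) ℝ) = 1 from
    Unitary.coe_star_mul_self _, one_mul, trace_diagonal]
  simp

lemma psd_trace_nonneg {A : Matrix (Fin n) (Fin n) ℝ} (hA : A.PosSemidef) :
    0 ≤ A.trace := by
  rw [trace_eq_sum_eig hA.1]
  exact Finset.sum_nonneg fun i _ => hA.eigenvalues_nonneg i

lemma trace_mul_nonneg {A B : Matrix (Fin n) (Fin n) ℝ}
    (hA : A.PosSemidef) (hB : B.PosSemidef) : 0 ≤ (A * B).trace := by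
  have hR : CFC.sqrt A * CFC.sqrt A = A := CFC.sqrt_mul_sqrt_self A hA.nonneg
  have h1 : (A * B).trace = (CFC.sqrt A * B * CFC.sqrt A).trace := by
    rw [trace_mul_cycle, hR]
  rw [h1]
  have := hB.mul_mul_conjTranspose_same (CFC.sqrt A)
  rw [(CFC.sqrt_nonneg A).posSemidef.1] at this
  exact psd_trace_nonneg this

lemma trace_ge_of_psd_det_pos {M : Matrix (Fin n) (Fin n) ℝ}
    (hM : M.PosSemidef) (hd : 0 < M.det) :
    (n : ℝ) + Real.log M.det ≤ M.trace := by
  have he := hM.1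
  have hdet : M.det = ∏ i, he.eigenvalues i := by
    simpa using he.det_eq_prod_eigenvalues
  have hpos : ∀ i, 0 < he.eigenvalues i := by
    intro i
    rcases lt_or_eq_of_le (hM.eigenvalues_nonneg i) with h | h
    · exact h
    · exfalso
      rw [hdet, Finset.prod_eq_zero (Finset.mem_univ i) h.symm] at hd
      exact lt_irrefl _ hd
  rw [trace_eq_sum_eig he, hdet,
    Real.log_prod (fun i _ => (hpos i).ne')]
  have h1 : ∀ i ∈ Finset.univ, 1 + Real.log (he.eigenvalues i) ≤ he.eigenvalues i := by
    intro i _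
    have := Real.log_le_sub_one_of_pos (hpos i)
    linarith
  calc (n : ℝ) + ∑ i, Real.log (he.eigenvalues i)
      = ∑ i : Fin n, (1 + Real.log (he.eigenvalues i)) := by
        rw [Finset.sum_add_distrib]; simp
    _ ≤ ∑ i, he.eigenvalues i := Finset.sum_le_sum h1

lemma key_ineq {A B : Matrix (Fin n) (Fin n) ℝ} (hA : A.PosDef) (hB : B.PosDef) :
    Real.log A.det + n ≤ Real.log B.det + (B⁻¹ * A).trace := by
  set R := CFC.sqrt A with hRdef
  have hR : R * R = A := CFC.sqrt_mul_sqrt_self A hA.posSemidef.nonneg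
  have hRh : Rᴴ = R := (CFC.sqrt_nonneg A).posSemidef.1
  have hMpsd : (R * B⁻¹ * R).PosSemidef := by
    have := (hB.inv.posSemidef).mul_mul_conjTranspose_same R
    rwa [hRh] at this
  have hRdet : R.det * R.det = A.det := by rw [← det_mul, hR]
  have hMdet : (R * B⁻¹ * R).det = A.det * B.det⁻¹ := by
    rw [det_mul, det_mul, det_nonsing_inv]; ring_nf
    rw [sq, hRdet, Ring.inverse_eq_inv]
  have hMtr : (R * B⁻¹ * R).trace = (B⁻¹ * A).trace := by
    rw [trace_mul_cycle, hR, trace_mul_comm]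
  have hMdpos : 0 < (R * B⁻¹ * R).det := by
    rw [hMdet]
    exact mul_pos hA.det_pos (inv_pos.2 hB.det_pos)
  have := trace_ge_of_psd_det_pos hMpsd hMdpos
  rw [hMtr, hMdet, Real.log_mul hA.det_pos.ne' (inv_pos.2 hB.det_pos).ne',
    Real.log_inv] at this
  linarith

end ConcAux

namespace ConcAux2
open ConcAux

variable {m q N : ℕ}

lemma col_sub (Y : Matrix (Fin m) (Fin N) ℝ) (Z : Matrix (Fin q) (Fin N) ℝ)
    (H : Matrix (Fin m) (Fin q) ℝ) (t : Fin N) :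
    Yᵀ t - H *ᵥ Zᵀ t = (Y - H * Z)ᵀ t := by
  funext i
  simp [mulVec, mul_apply, dotProduct, Matrix.sub_apply]

lemma sum_quad (A : Matrix (Fin m) (Fin m) ℝ) (E : Matrix (Fin m) (Fin N) ℝ) :
    ∑ t, (Eᵀ t) ⬝ᵥ (A *ᵥ (Eᵀ t)) = (A * (E * Eᵀ)).trace := by
  rw [← Matrix.mul_assoc]
  simp only [dotProduct, mulVec, trace, diag_apply, mul_apply, transpose_apply,
    Finset.mul_sum, Finset.sum_mul]
  rw [Finset.sum_comm]
  refine Finset.sum_congr rfl fun i _ => ?_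
  refine Finset.sum_congr rfl fun t _ => Finset.sum_congr rfl fun j _ => by ring

lemma negLogLik_eq (Y : Matrix (Fin m) (Fin N) ℝ) (Z : Matrix (Fin q) (Fin N) ℝ)
    (H : Matrix (Fin m) (Fin q) ℝ) (S : Matrix (Fin m) (Fin m) ℝ) :
    negLogLik Y Z H S = ((m : ℝ) * N / 2) * Real.log (2 * Real.pi)
      + ((N : ℝ) / 2) * Real.log S.det
      + (1 / 2) * (S⁻¹ * ((Y - H * Z) * (Y - H * Z)ᵀ)).trace := by
  unfold negLogLik
  rw [← sum_quad]
  simp only [col_sub]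

end ConcAux2

open ConcAux ConcAux2 in
theorem concentrated_gaussian_loglik' {m q N : ℕ}
    (Y : Matrix (Fin m) (Fin N) ℝ) (Z : Matrix (Fin q) (Fin N) ℝ)
    (hZ : IsUnit (Z * Zᵀ))
    (Hhat : Matrix (Fin m) (Fin q) ℝ) (hH : Hhat = Y * Zᵀ * (Z * Zᵀ)⁻¹)
    (Shat : Matrix (Fin m) (Fin m) ℝ)
    (hS : Shat = (N : ℝ)⁻¹ • ((Y - Hhat * Z) * (Y - Hhat * Z)ᵀ))
    (hSpd : Shat.PosDef) :
    Shat = (N : ℝ)⁻¹ • (Y * Yᵀ) - (N : ℝ)⁻¹ • (Hhat * (Z * Zᵀ) * Hhatᵀ) ∧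
    (∀ (H : Matrix (Fin m) (Fin q) ℝ) (S : Matrix (Fin m) (Fin m) ℝ), S.PosDef →
        negLogLik Y Z Hhat Shat ≤ negLogLik Y Z H S) ∧
    negLogLik Y Z Hhat Shat
      = ((m : ℝ) * N / 2) * (Real.log (2 * Real.pi) + 1)
        + ((N : ℝ) / 2) * Real.log Shat.det := by
  have hdet : IsUnit (Z * Zᵀ).det := (Matrix.isUnit_iff_isUnit_det _).1 hZ
  have hkey : Hhat * (Z * Zᵀ) = Y * Zᵀ := by
    rw [hH, Matrix.mul_assoc, Matrix.nonsing_inv_mul _ hdet, Matrix.mul_one]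
  have hEZ : (Y - Hhat * Z) * Zᵀ = 0 := by
    rw [Matrix.sub_mul, Matrix.mul_assoc, hkey, sub_self]
  have h2 : Z * Yᵀ = (Z * Zᵀ) * Hhatᵀ := by
    have := congrArg Matrix.transpose hkey
    rw [Matrix.transpose_mul, Matrix.transpose_mul, Matrix.transpose_transpose,
      Matrix.transpose_mul, Matrix.transpose_transpose] at this
    exact this.symm
  have hexpand : (Y - Hhat * Z) * (Y - Hhat * Z)ᵀ
      = Y * Yᵀ - Hhat * (Z * Zᵀ) * Hhatᵀ := by
    have e1 : Hhat * Z * Yᵀ = Hhat * (Z * Zᵀ) * Hhatᵀ := by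
      rw [Matrix.mul_assoc, h2, ← Matrix.mul_assoc]
    have e2 : Y * (Zᵀ * Hhatᵀ) = Hhat * (Z * Zᵀ) * Hhatᵀ := by
      rw [← Matrix.mul_assoc, ← hkey]
    have e3 : Hhat * Z * (Zᵀ * Hhatᵀ) = Hhat * (Z * Zᵀ) * Hhatᵀ := by
      rw [← Matrix.mul_assoc, Matrix.mul_assoc Hhat Z Zᵀ]
    rw [Matrix.transpose_sub, Matrix.transpose_mul, Matrix.mul_sub, Matrix.sub_mul,
      Matrix.sub_mul, e1, e2, e3]
    abel
  have part1 : Shat = (N : ℝ)⁻¹ • (Y * Yᵀ) - (N : ℝ)⁻¹ • (Hhat * (Z * Zᵀ) * Hhatᵀ) := by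
    rw [hS, hexpand, smul_sub]
  rcases Nat.eq_zero_or_pos N with hN | hN
  · subst hN
    rcases Nat.eq_zero_or_pos m with hm | hm
    · subst hm
      refine ⟨part1, ?_, ?_⟩
      · intro H S _
        simp [negLogLik]
      · simp [negLogLik]
    · exfalso
      have h0 : Shat = 0 := by rw [hS]; norm_num
      have hd := hSpd.det_pos
      haveI : Nonempty (Fin m) := Fin.pos_iff_nonempty.1 hm
      rw [h0, Matrix.det_zero] at hd
      exact lt_irrefl _ hd
  · have hNne : (N:ℝ) ≠ 0 := Nat.cast_ne_zero.2 hN.ne'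
    have hEhat : (Y - Hhat * Z) * (Y - Hhat * Z)ᵀ = (N : ℝ) • Shat := by
      rw [hS, smul_smul, mul_inv_cancel₀ hNne, one_smul]
    have hShatUnit : IsUnit Shat.det := hSpd.det_pos.ne'.isUnit
    have htrace1 : (Shat⁻¹ * ((N:ℝ) • Shat)).trace = (N:ℝ) * m := by
      rw [mul_smul_comm, Matrix.nonsing_inv_mul _ hShatUnit, Matrix.trace_smul,
        Matrix.trace_one]
      simp [mul_comm]
    have hval : negLogLik Y Z Hhat Shat
        = ((m : ℝ) * N / 2) * Real.log (2 * Real.pi) + ((N : ℝ) / 2) * Real.log Shat.det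
          + (1/2) * ((N:ℝ) * m) := by
      rw [negLogLik_eq, hEhat, htrace1]
    refine ⟨part1, ?_, ?_⟩
    · intro H S hSpdS
      rw [hval, negLogLik_eq]
      have hE : Y - H * Z = (Y - Hhat * Z) + (Hhat - H) * Z := by
        rw [Matrix.sub_mul]; abel
      have c1 : (Y - Hhat * Z) * ((Hhat - H) * Z)ᵀ = 0 := by
        rw [Matrix.transpose_mul, ← Matrix.mul_assoc, hEZ, Matrix.zero_mul]
      have c2 : ((Hhat - H) * Z) * (Y - Hhat * Z)ᵀ = 0 := by
        have := congrArg Matrix.transpose c1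
        rwa [Matrix.transpose_mul, Matrix.transpose_transpose,
          Matrix.transpose_zero] at this
      have hEEt : (Y - H * Z) * (Y - H * Z)ᵀ
          = (N:ℝ) • Shat + ((Hhat - H) * Z) * ((Hhat - H) * Z)ᵀ := by
        rw [hE, Matrix.transpose_add, Matrix.add_mul, Matrix.mul_add, Matrix.mul_add,
          c1, c2, hEhat]
        abel
      have hW : (((Hhat - H) * Z) * ((Hhat - H) * Z)ᵀ).PosSemidef := by
        have := Matrix.posSemidef_self_mul_conjTranspose ((Hhat - H) * Z)
        rwa [Matrix.conjTranspose_eq_transpose_of_trivial] at this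
      have hSinv : (S⁻¹).PosSemidef := hSpdS.inv.posSemidef
      have ht2 : 0 ≤ (S⁻¹ * (((Hhat - H) * Z) * ((Hhat - H) * Z)ᵀ)).trace :=
        trace_mul_nonneg hSinv hW
      have htr : (S⁻¹ * ((Y - H * Z) * (Y - H * Z)ᵀ)).trace
          = (N:ℝ) * (S⁻¹ * Shat).trace
            + (S⁻¹ * (((Hhat - H) * Z) * ((Hhat - H) * Z)ᵀ)).trace := by
        rw [hEEt, Matrix.mul_add, Matrix.trace_add, mul_smul_comm, Matrix.trace_smul]
        simp
      have hki := key_ineq hSpd hSpdS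
      rw [htr]
      have hNn : (0:ℝ) ≤ (N:ℝ)/2 := by positivity
      have hmul := mul_le_mul_of_nonneg_left hki hNn
      nlinarith [ht2]
    · rw [hval]; ring

/-- **Concentrated Gaussian log-likelihood.**
With `ZZᵀ` invertible, `Ĥ = YZᵀ(ZZᵀ)⁻¹` and
`Σ̂ = (1/N)(Y − ĤZ)(Y − ĤZ)ᵀ = (1/N)YYᵀ − (1/N)Ĥ(ZZᵀ)Ĥᵀ` positive definite,
the pair `(Ĥ, Σ̂)` minimizes the Gaussian negative log-likelihood over all `H` and
symmetric positive definite `Σ`, and the minimum value is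
`(mN/2)(log(2π)+1) + (N/2)·log det(Σ̂)`. -/
theorem concentrated_gaussian_loglik {m q N : ℕ}
    (Y : Matrix (Fin m) (Fin N) ℝ) (Z : Matrix (Fin q) (Fin N) ℝ)
    (hZ : IsUnit (Z * Zᵀ))
    (Hhat : Matrix (Fin m) (Fin q) ℝ) (hH : Hhat = Y * Zᵀ * (Z * Zᵀ)⁻¹)
    (Shat : Matrix (Fin m) (Fin m) ℝ)
    (hS : Shat = (N : ℝ)⁻¹ • ((Y - Hhat * Z) * (Y - Hhat * Z)ᵀ))
    (hSpd : Shat.PosDef) :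
    Shat = (N : ℝ)⁻¹ • (Y * Yᵀ) - (N : ℝ)⁻¹ • (Hhat * (Z * Zᵀ) * Hhatᵀ) ∧
    (∀ (H : Matrix (Fin m) (Fin q) ℝ) (S : Matrix (Fin m) (Fin m) ℝ), S.PosDef →
        negLogLik Y Z Hhat Shat ≤ negLogLik Y Z H S) ∧
    negLogLik Y Z Hhat Shat
      = ((m : ℝ) * N / 2) * (Real.log (2 * Real.pi) + 1)
        + ((N : ℝ) / 2) * Real.log Shat.det := by
  exact concentrated_gaussian_loglik' Y Z hZ Hhat hH Shat hS hSpd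
end

section
/- Existence of the constrained (canonical correlation) singular value decomposition: Let P ∈ ℝ^{m×m} and R ∈ ℝ^{q×q} be symmetric positive definite and let C ∈ ℝ^{m×q}. Then there exist invertible matrices Ũ ∈ ℝ^{m×m} and Ṽ ∈ ℝ^{q×q} and a matrix S̃ ∈ ℝ^{m×q} whose off-diagonal entries vanish and whose diagonal entries are nonnegative and nonincreasing, such that ŨᵀPŨ = I_m, ṼᵀRṼ = I_q, and ŨᵀCṼ = S̃. -/
open Matrix

/-- Whitening: a positive definite real matrix can be congruence-transformed to `1`. -/
lemma whitening_aux {n : ℕ} {P : Matrix (Fin n) (Fin n) ℝ} (hP : P.PosDef) :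
    ∃ L : Matrix (Fin n) (Fin n) ℝ, IsUnit L ∧ Lᵀ * P * L = 1 := by
  obtain ⟨Q, hQsa, -, hQQ⟩ := CFC.exists_sqrt_of_isSelfAdjoint_of_quasispectrumRestricts
    hP.isHermitian (open scoped MatrixOrder in
      QuasispectrumRestricts.nnreal_of_nonneg hP.posSemidef.nonneg)
  have hQsymm : Qᵀ = Q := by
    have h2 : Qᴴ = Q := hQsa
    rwa [conjTranspose_eq_transpose_of_trivial] at h2
  have hdetP : P.det ≠ 0 := ne_of_gt hP.det_pos
  have hdetQ : Q.det ≠ 0 := by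
    intro h
    apply hdetP
    rw [← hQQ, det_mul, h, mul_zero]
  have hQunit : IsUnit Q.det := isUnit_iff_ne_zero.mpr hdetQ
  refine ⟨Q⁻¹, ?_, ?_⟩
  · exact (Matrix.isUnit_nonsing_inv_iff).mpr ((Matrix.isUnit_iff_isUnit_det Q).mpr hQunit)
  · rw [transpose_nonsing_inv, hQsymm, ← hQQ]
    rw [show Q⁻¹ * (Q * Q) * Q⁻¹ = (Q⁻¹ * Q) * (Q * Q⁻¹) by simp only [mul_assoc]]
    rw [Matrix.nonsing_inv_mul Q hQunit, Matrix.mul_nonsing_inv Q hQunit, one_mul]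


lemma svd_aux {m q : ℕ} (A : Matrix (Fin m) (Fin q) ℝ) :
    ∃ (U : Matrix (Fin m) (Fin m) ℝ) (V : Matrix (Fin q) (Fin q) ℝ) (s : Fin q → ℝ),
      Uᵀ * U = 1 ∧ Vᵀ * V = 1 ∧ (∀ j, 0 ≤ s j) ∧
      (∀ j j' : Fin q, j ≤ j' → s j' ≤ s j) ∧
      Uᵀ * A * V = Matrix.of (fun (i : Fin m) (j : Fin q) => if (i : ℕ) = (j : ℕ) then s j else 0) := by
  classical
  -- the Gram matrix
  have hpsd : (Aᵀ * A).PosSemidef := by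
    have := Matrix.posSemidef_conjTranspose_mul_self A
    rwa [conjTranspose_eq_transpose_of_trivial] at this
  have hG : (Aᵀ * A).IsHermitian := hpsd.1
  set μ₀ : Fin q → ℝ := hG.eigenvalues with hμ₀
  set σ : Equiv.Perm (Fin q) := Tuple.sort (fun j => -μ₀ j) with hσ
  have hmono : Monotone ((fun j => -μ₀ j) ∘ σ) := Tuple.monotone_sort (fun j => -μ₀ j)
  set μ : Fin q → ℝ := fun j => μ₀ (σ j) with hμ
  have hμanti : ∀ j j' : Fin q, j ≤ j' → μ j' ≤ μ j := by
    intro j j' h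
    have := hmono h
    simp only [Function.comp_apply, neg_le_neg_iff] at this
    simpa [hμ] using this
  have hμnn : ∀ j, 0 ≤ μ j := fun j => hpsd.eigenvalues_nonneg (σ j)
  set V₀ : Matrix (Fin q) (Fin q) ℝ := (hG.eigenvectorUnitary : Matrix (Fin q) (Fin q) ℝ) with hV₀
  have hV₀diag : V₀ᵀ * (Aᵀ * A) * V₀ = diagonal μ₀ := by
    have := hG.conjStarAlgAut_star_eigenvectorUnitary
    rw [Unitary.conjStarAlgAut_apply, Unitary.coe_star, star_star] at this
    rwa [Matrix.star_eq_conjTranspose, conjTranspose_eq_transpose_of_trivial,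
      show (RCLike.ofReal ∘ hG.eigenvalues : Fin q → ℝ) = μ₀ by ext j; simp [hμ₀]] at this
  have hV₀orth : V₀ᵀ * V₀ = 1 := by
    have := Unitary.coe_star_mul_self hG.eigenvectorUnitary
    rwa [Matrix.star_eq_conjTranspose, conjTranspose_eq_transpose_of_trivial] at this
  set V : Matrix (Fin q) (Fin q) ℝ := V₀.submatrix id ⇑σ with hV
  have hVV : Vᵀ * V = 1 := by
    rw [hV, transpose_submatrix]
    rw [show (id : Fin q → Fin q) = ⇑(Equiv.refl (Fin q)) from rfl]
    rw [submatrix_mul_equiv, hV₀orth, submatrix_one_equiv]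
  have hVdiag : Vᵀ * (Aᵀ * A) * V = diagonal μ := by
    rw [hV, transpose_submatrix]
    rw [show (id : Fin q → Fin q) = ⇑(Equiv.refl (Fin q)) from rfl]
    rw [show (Aᵀ * A) = (Aᵀ * A).submatrix ⇑(Equiv.refl (Fin q)) ⇑(Equiv.refl (Fin q)) by simp]
    rw [submatrix_mul_equiv, submatrix_mul_equiv]
    rw [show V₀ᵀ * (Aᵀ * A) * V₀ = diagonal μ₀ from hV₀diag]
    rw [Matrix.submatrix_diagonal _ _ σ.injective]
    rfl
  -- columns of A*V
  set W : Fin q → EuclideanSpace ℝ (Fin m) := fun j => WithLp.toLp 2 (fun k => (A * V) k j) with hWdef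
  have hWent : ∀ j j' : Fin q, ∑ k, (A * V) k j * (A * V) k j'
      = if j = j' then μ j else 0 := by
    intro j j'
    have h1 : (A * V)ᵀ * (A * V) = diagonal μ := by
      rw [transpose_mul, show Vᵀ * Aᵀ * (A * V) = Vᵀ * (Aᵀ * A) * V by
        rw [Matrix.mul_assoc, Matrix.mul_assoc, Matrix.mul_assoc], hVdiag]
    have := congrFun (congrFun h1 j) j'
    simpa [mul_apply, transpose_apply, diagonal_apply, eq_comm, mul_comm] using this
  set s : Fin q → ℝ := fun j => Real.sqrt (μ j) with hs
  have hsnn : ∀ j, 0 ≤ s j := fun j => Real.sqrt_nonneg _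
  have hs2 : ∀ j, s j * s j = μ j := fun j => Real.mul_self_sqrt (hμnn j)
  have hzero : ∀ j : Fin q, μ j = 0 → ∀ k, (A * V) k j = 0 := by
    intro j hj k
    have h0 : ∑ k, (A * V) k j * (A * V) k j = 0 := by rw [hWent j j]; simp [hj]
    have := (Finset.sum_eq_zero_iff_of_nonneg
      (fun k _ => mul_self_nonneg ((A * V) k j))).mp h0 k (Finset.mem_univ k)
    exact mul_self_eq_zero.mp this
  -- at most m nonzero singular values
  have hrank : ∀ j : Fin q, m ≤ (j : ℕ) → μ j = 0 := by
    intro j hmj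
    by_contra hne
    have hμjpos : 0 < μ j := lt_of_le_of_ne (hμnn j) (Ne.symm hne)
    -- an orthonormal family of m+1 vectors in ℝ^m
    set g : Fin (m + 1) → Fin q := fun i => ⟨(i : ℕ), lt_of_le_of_lt (by omega) j.isLt⟩ with hg
    have hgle : ∀ i, g i ≤ j := fun i => by
      simp only [hg, Fin.le_def]; omega
    have hgpos : ∀ i, 0 < μ (g i) := fun i =>
      lt_of_lt_of_le hμjpos (hμanti (g i) j (hgle i))
    set f : Fin (m + 1) → EuclideanSpace ℝ (Fin m) := fun i => (s (g i))⁻¹ • W (g i) with hf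
    have hforth : Orthonormal ℝ f := by
      rw [orthonormal_iff_ite]
      intro a b
      have hinner : (inner ℝ (f a) (f b) : ℝ)
          = (s (g a))⁻¹ * (s (g b))⁻¹ * (if g a = g b then μ (g a) else 0) := by
        simp only [hf, PiLp.inner_apply, RCLike.inner_apply, starRingEnd_apply, star_trivial,
          PiLp.smul_apply, smul_eq_mul]
        rw [← hWent (g a) (g b), Finset.mul_sum]
        refine Finset.sum_congr rfl fun k _ => ?_
        show (s (g b))⁻¹ * (A * V) k (g b) * ((s (g a))⁻¹ * (A * V) k (g a)) = _
        ring
      rw [hinner]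
      by_cases hab : a = b
      · subst hab
        simp only [if_pos rfl]
        have hspos : 0 < s (g a) := Real.sqrt_pos.mpr (hgpos a)
        field_simp
        simp only [if_true, mul_one, sq, hs2]
      · have hgab : g a ≠ g b := by
          intro h
          exact hab (Fin.ext (by simpa [hg, Fin.ext_iff] using h))
        simp [hab, hgab]
    have hcard := hforth.linearIndependent.fintype_card_le_finrank
    rw [finrank_euclideanSpace_fin, Fintype.card_fin] at hcard
    omega
  -- inner product on EuclideanSpace
  have hinnerE : ∀ x y : EuclideanSpace ℝ (Fin m), (inner ℝ x y : ℝ) = ∑ k, x k * y k := by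
    intro x y
    simp [PiLp.inner_apply, RCLike.inner_apply, starRingEnd_apply, star_trivial]
    exact Finset.sum_congr rfl fun k _ => mul_comm _ _
  -- the left orthonormal system
  set v : Fin m → EuclideanSpace ℝ (Fin m) := fun i =>
    if h : (i : ℕ) < q then (s ⟨(i : ℕ), h⟩)⁻¹ • W ⟨(i : ℕ), h⟩ else 0 with hv
  set T : Set (Fin m) := {i | ∃ h : (i : ℕ) < q, μ ⟨(i : ℕ), h⟩ ≠ 0} with hT
  have hvT : Orthonormal ℝ (T.restrict v) := by
    rw [orthonormal_iff_ite]
    rintro ⟨a, ha, hμa⟩ ⟨b, hb, hμb⟩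
    set ja : Fin q := ⟨(a : ℕ), ha⟩ with hja
    set jb : Fin q := ⟨(b : ℕ), hb⟩ with hjb
    have hva : T.restrict v ⟨a, ha, hμa⟩ = (s ja)⁻¹ • W ja := by
      show v a = _
      rw [hv]; exact dif_pos ha
    have hvb : T.restrict v ⟨b, hb, hμb⟩ = (s jb)⁻¹ • W jb := by
      show v b = _
      rw [hv]; exact dif_pos hb
    rw [hva, hvb, hinnerE]
    have hsum : ∑ k, ((s ja)⁻¹ • W ja) k * ((s jb)⁻¹ • W jb) k
        = (s ja)⁻¹ * (s jb)⁻¹ * (if ja = jb then μ ja else 0) := by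
      rw [← hWent ja jb, Finset.mul_sum]
      refine Finset.sum_congr rfl fun k _ => ?_
      show (s ja)⁻¹ * (A * V) k ja * ((s jb)⁻¹ * (A * V) k jb) = _
      ring
    rw [hsum]
    by_cases hab : a = b
    · have hjab : ja = jb := Fin.ext (by simp [hja, hjb, hab])
      have hsub : (⟨a, ha, hμa⟩ : T) = ⟨b, hb, hμb⟩ := Subtype.ext hab
      have hspos : 0 < s ja := Real.sqrt_pos.mpr (lt_of_le_of_ne (hμnn ja) (Ne.symm hμa))
      rw [if_pos hjab, if_pos hsub, hjab]
      have hsnz : s jb ≠ 0 := ne_of_gt (hjab ▸ hspos)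
      rw [← hs2 jb]
      field_simp
    · have hjab : ja ≠ jb := fun h => hab (Fin.ext (by
        have := congrArg Fin.val h
        simpa [hja, hjb] using this))
      have hsub : (⟨a, ha, hμa⟩ : T) ≠ ⟨b, hb, hμb⟩ := fun h => hab (congrArg Subtype.val h)
      rw [if_neg hjab, if_neg hsub, mul_zero]
  obtain ⟨bE, hbE⟩ := hvT.exists_orthonormalBasis_extension_of_card_eq
      (by simp [finrank_euclideanSpace_fin])
  set U : Matrix (Fin m) (Fin m) ℝ := Matrix.of (fun k i => bE i k) with hU
  have hUU : Uᵀ * U = 1 := by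
    ext i i'
    have h := (orthonormal_iff_ite.mp bE.orthonormal) i i'
    rw [hinnerE] at h
    simp only [hU, mul_apply, transpose_apply, Matrix.of_apply, one_apply]
    exact h
  refine ⟨U, V, s, hUU, hVV, hsnn, fun j j' hjj => Real.sqrt_le_sqrt (hμanti j j' hjj), ?_⟩
  ext i j
  have hent : (Uᵀ * A * V) i j = ∑ k, bE i k * (A * V) k j := by
    rw [Matrix.mul_assoc]
    simp only [mul_apply, transpose_apply, hU, Matrix.of_apply]
  rw [hent]
  by_cases hj : μ j = 0
  · rw [Finset.sum_eq_zero fun k _ => by rw [hzero j hj k, mul_zero]]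
    have : s j = 0 := by rw [hs]; simp [hj]
    simp [this]
  · have hjm : (j : ℕ) < m := by
      by_contra h
      exact hj (hrank j (le_of_not_gt h))
    set i₀ : Fin m := ⟨(j : ℕ), hjm⟩ with hi₀
    have hi₀q : ((i₀ : Fin m) : ℕ) < q := j.isLt
    have hi₀j : (⟨(i₀ : ℕ), hi₀q⟩ : Fin q) = j := Fin.ext rfl
    have hi₀T : i₀ ∈ T := ⟨hi₀q, by rw [hi₀j]; exact hj⟩
    have hbi₀ : bE i₀ = (s j)⁻¹ • W j := by
      rw [hbE i₀ hi₀T]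
      simp only [hv, dif_pos hi₀q, hi₀j]
    have hspos : 0 < s j := Real.sqrt_pos.mpr (lt_of_le_of_ne (hμnn j) (Ne.symm hj))
    have hWj : ∀ k, (A * V) k j = s j * bE i₀ k := by
      intro k
      rw [hbi₀]
      show (A * V) k j = s j * ((s j)⁻¹ * (A * V) k j)
      field_simp
    have hsum2 : ∑ k, bE i k * (A * V) k j = s j * ∑ k, bE i k * bE i₀ k := by
      rw [Finset.mul_sum]
      refine Finset.sum_congr rfl fun k _ => ?_
      rw [hWj k]; ring
    rw [hsum2]
    have h := (orthonormal_iff_ite.mp bE.orthonormal) i i₀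
    rw [hinnerE] at h
    rw [h]
    have hiff : (i = i₀) ↔ ((i : ℕ) = (j : ℕ)) := by
      rw [Fin.ext_iff, hi₀]
    by_cases hii : i = i₀
    · rw [if_pos hii, Matrix.of_apply, if_pos (hiff.mp hii), mul_one]
    · rw [if_neg hii, Matrix.of_apply, if_neg (fun h' => hii (hiff.mpr h')), mul_zero]


/-- **Existence of the constrained (canonical correlation) SVD.**
Let `P ∈ ℝ^{m×m}` and `R ∈ ℝ^{q×q}` be symmetric positive definite and `C ∈ ℝ^{m×q}`.
Then there exist invertible `Ũ ∈ ℝ^{m×m}`, `Ṽ ∈ ℝ^{q×q}` and a rectangular-diagonal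
`S̃ ∈ ℝ^{m×q}` with nonnegative, nonincreasing diagonal entries such that
`ŨᵀPŨ = I_m`, `ṼᵀRṼ = I_q` and `ŨᵀCṼ = S̃`. -/
theorem constrained_svd_exists {m q : ℕ}
    (P : Matrix (Fin m) (Fin m) ℝ) (hP : P.PosDef)
    (R : Matrix (Fin q) (Fin q) ℝ) (hR : R.PosDef)
    (C : Matrix (Fin m) (Fin q) ℝ) :
    ∃ (U : Matrix (Fin m) (Fin m) ℝ) (V : Matrix (Fin q) (Fin q) ℝ)
      (S : Matrix (Fin m) (Fin q) ℝ),
      IsUnit U ∧ IsUnit V ∧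
      (∀ (i : Fin m) (j : Fin q), (i : ℕ) ≠ (j : ℕ) → S i j = 0) ∧
      (∀ (i : Fin m) (j : Fin q), (i : ℕ) = (j : ℕ) → 0 ≤ S i j) ∧
      (∀ (i i' : Fin m) (j j' : Fin q), (i : ℕ) = (j : ℕ) → (i' : ℕ) = (j' : ℕ) →
        (i : ℕ) ≤ (i' : ℕ) → S i' j' ≤ S i j) ∧
      Uᵀ * P * U = 1 ∧ Vᵀ * R * V = 1 ∧ Uᵀ * C * V = S := by
  obtain ⟨L, hLunit, hL1⟩ := whitening_aux hP
  obtain ⟨M, hMunit, hM1⟩ := whitening_aux hR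
  obtain ⟨U₀, V₁, s, hU₀U₀, hV₁V₁, hsnn, hsanti, hsvd⟩ := svd_aux (Lᵀ * C * M)
  have hU₀unit : IsUnit U₀ := ⟨⟨U₀, U₀ᵀ, mul_eq_one_comm.mp hU₀U₀, hU₀U₀⟩, rfl⟩
  have hV₁unit : IsUnit V₁ := ⟨⟨V₁, V₁ᵀ, mul_eq_one_comm.mp hV₁V₁, hV₁V₁⟩, rfl⟩
  refine ⟨L * U₀, M * V₁,
    Matrix.of (fun (i : Fin m) (j : Fin q) => if (i : ℕ) = (j : ℕ) then s j else 0),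
    hLunit.mul hU₀unit, hMunit.mul hV₁unit, ?_, ?_, ?_, ?_, ?_, ?_⟩
  · intro i j hij
    simp [Matrix.of_apply, hij]
  · intro i j hij
    simp only [Matrix.of_apply, if_pos hij]
    exact hsnn j
  · intro i i' j j' hij hij' hii
    simp only [Matrix.of_apply, if_pos hij, if_pos hij']
    exact hsanti j j' (Fin.le_def.mpr (by omega))
  · rw [transpose_mul, show U₀ᵀ * Lᵀ * P * (L * U₀) = U₀ᵀ * (Lᵀ * P * L) * U₀ by
      simp only [Matrix.mul_assoc], hL1, Matrix.mul_one, hU₀U₀]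
  · rw [transpose_mul, show V₁ᵀ * Mᵀ * R * (M * V₁) = V₁ᵀ * (Mᵀ * R * M) * V₁ by
      simp only [Matrix.mul_assoc], hM1, Matrix.mul_one, hV₁V₁]
  · rw [transpose_mul, show U₀ᵀ * Lᵀ * C * (M * V₁) = U₀ᵀ * (Lᵀ * C * M) * V₁ by
      simp only [Matrix.mul_assoc], hsvd]
end

section
/- Weighted SVD realization (core of the unified state-realization theorem): Let H ∈ ℝ^{m×q} with rank(H) = n, let W₁ ∈ ℝ^{m×m} and W₂ ∈ ℝ^{q×q} be invertible, and let W₁HW₂ = USVᵀ be a singular value decomposition, i.e., U ∈ ℝ^{m×m} and V ∈ ℝ^{q×q} are orthogonal and S ∈ ℝ^{m×q} is rectangular diagonal with nonnegative nonincreasing diagonal entries. Then S has exactly n positive diagonal entries, and with U_n ∈ ℝ^{m×n} the first n columns of U, V_n ∈ ℝ^{q×n} the first n columns of V, and S_n ∈ ℝ^{n×n} the top-left n×n block of S, one has (W₁⁻¹·U_n·S_n^{1/2})·(S_n^{1/2}·V_nᵀ·W₂⁻¹) = H. -/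
open Matrix

/-- **Weighted SVD realization (core of the unified state-realization theorem).**
Let `H ∈ ℝ^{m×q}` with `rank(H) = n`, let `W₁, W₂` be invertible, and let
`W₁HW₂ = USVᵀ` be a singular value decomposition (`U`, `V` orthogonal, `S`
rectangular diagonal with nonnegative nonincreasing diagonal entries).  Then `S` has
exactly `n` positive diagonal entries, and with `U_n` the first `n` columns of `U`,
`V_n` the first `n` columns of `V` and `S_n` the top-left `n×n` block of `S`, one has
`(W₁⁻¹·U_n·S_n^{1/2})·(S_n^{1/2}·V_nᵀ·W₂⁻¹) = H`, where `S_n^{1/2}` is the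
entrywise-square-root (diagonal) matrix. -/
theorem weighted_svd_realization {m q n : ℕ} (hnm : n ≤ m) (hnq : n ≤ q)
    (H : Matrix (Fin m) (Fin q) ℝ) (hrank : H.rank = n)
    (W₁ : Matrix (Fin m) (Fin m) ℝ) (W₂ : Matrix (Fin q) (Fin q) ℝ)
    (hW₁ : IsUnit W₁) (hW₂ : IsUnit W₂)
    (U : Matrix (Fin m) (Fin m) ℝ) (V : Matrix (Fin q) (Fin q) ℝ)
    (S : Matrix (Fin m) (Fin q) ℝ)
    (hU : Uᵀ * U = 1) (hV : Vᵀ * V = 1)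
    (hSdiag : ∀ (i : Fin m) (j : Fin q), (i : ℕ) ≠ (j : ℕ) → S i j = 0)
    (hSnn : ∀ (i : Fin m) (j : Fin q), (i : ℕ) = (j : ℕ) → 0 ≤ S i j)
    (hSanti : ∀ (i i' : Fin m) (j j' : Fin q), (i : ℕ) = (j : ℕ) → (i' : ℕ) = (j' : ℕ) →
      (i : ℕ) ≤ (i' : ℕ) → S i' j' ≤ S i j)
    (hSVD : W₁ * H * W₂ = U * S * Vᵀ) :
    (∀ (i : Fin m) (j : Fin q), (i : ℕ) = (j : ℕ) → (0 < S i j ↔ (i : ℕ) < n)) ∧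
    (W₁⁻¹ * U.submatrix id (Fin.castLE hnm)
        * Matrix.of (fun a b : Fin n => Real.sqrt (S (Fin.castLE hnm a) (Fin.castLE hnq b))))
      * (Matrix.of (fun a b : Fin n => Real.sqrt (S (Fin.castLE hnm a) (Fin.castLE hnq b)))
        * (V.submatrix id (Fin.castLE hnq))ᵀ * W₂⁻¹) = H := by
  classical
  have hW₁d : IsUnit W₁.det := (Matrix.isUnit_iff_isUnit_det _).mp hW₁
  have hW₂d : IsUnit W₂.det := (Matrix.isUnit_iff_isUnit_det _).mp hW₂
  have hUdet : IsUnit U.det := by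
    have h := congrArg Matrix.det hU
    rw [Matrix.det_mul, Matrix.det_transpose, Matrix.det_one] at h
    exact IsUnit.of_mul_eq_one _ h
  have hVdet : IsUnit V.det := by
    have h := congrArg Matrix.det hV
    rw [Matrix.det_mul, Matrix.det_transpose, Matrix.det_one] at h
    exact IsUnit.of_mul_eq_one _ h
  -- rank of S
  have hSrank : S.rank = n := by
    have h1 : (W₁ * H * W₂).rank = n := by
      rw [Matrix.rank_mul_eq_left_of_isUnit_det W₂ (W₁ * H) hW₂d,
        Matrix.rank_mul_eq_right_of_isUnit_det W₁ H hW₁d, hrank]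
    rw [hSVD] at h1
    rwa [Matrix.rank_mul_eq_left_of_isUnit_det Vᵀ (U * S) (by rwa [Matrix.det_transpose]),
      Matrix.rank_mul_eq_right_of_isUnit_det U S hUdet] at h1
  -- diagonal entries of S
  set d : Fin m → ℝ := fun i => if h : (i : ℕ) < q then S i ⟨i, h⟩ else 0 with hd_def
  have hd_nonneg : ∀ i, 0 ≤ d i := by
    intro i
    simp only [hd_def]
    split
    · exact hSnn _ _ rfl
    · exact le_rfl
  have hSST : S * Sᵀ = Matrix.diagonal (fun i => d i * d i) := by
    ext i j
    simp only [Matrix.mul_apply, Matrix.transpose_apply, Matrix.diagonal_apply]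
    by_cases hij : i = j
    · subst hij
      rw [if_pos rfl]
      by_cases hq : (i : ℕ) < q
      · rw [Finset.sum_eq_single (⟨(i : ℕ), hq⟩ : Fin q)]
        · simp only [hd_def, dif_pos hq]
        · intro l _ hl
          have : (i : ℕ) ≠ (l : ℕ) := fun h => hl (Fin.ext h.symm)
          rw [hSdiag i l this, zero_mul]
        · intro h; exact absurd (Finset.mem_univ _) h
      · rw [Finset.sum_eq_zero, hd_def]
        · simp only [dif_neg hq, mul_zero]
        · intro l _
          have : (i : ℕ) ≠ (l : ℕ) := by omega
          rw [hSdiag i l this, zero_mul]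
    · rw [if_neg hij]
      apply Finset.sum_eq_zero
      intro l _
      by_cases hil : (i : ℕ) = (l : ℕ)
      · have : (j : ℕ) ≠ (l : ℕ) := fun h => hij (Fin.ext (hil.trans h.symm))
        rw [hSdiag j l this, mul_zero]
      · rw [hSdiag i l hil, zero_mul]
  have hcard : Fintype.card {i : Fin m // d i ≠ 0} = n := by
    have h2 := S.rank_self_mul_transpose
    rw [hSST, Matrix.rank_diagonal] at h2
    rw [← hSrank, ← h2]
    exact Fintype.card_congr (Equiv.subtypeEquivRight fun i => (mul_self_ne_zero).symm)
  have hcardF : (Finset.univ.filter (fun i : Fin m => d i ≠ 0)).card = n := by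
    rw [← hcard, Fintype.card_subtype]
  -- downward closedness
  have hmono : ∀ i i' : Fin m, i ≤ i' → d i' ≠ 0 → d i ≠ 0 := by
    intro i i' hle h
    have hq' : (i' : ℕ) < q := by
      by_contra hq'
      exact h (by simp only [hd_def, dif_neg hq'])
    have hq : (i : ℕ) < q := lt_of_le_of_lt hle hq'
    have hpos : 0 < S i' ⟨(i' : ℕ), hq'⟩ := by
      rcases lt_or_eq_of_le (hSnn i' ⟨(i' : ℕ), hq'⟩ rfl) with h' | h'
      · exact h'
      · exact absurd (by simp only [hd_def, dif_pos hq', ← h']) h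
    have := hSanti i i' ⟨(i : ℕ), hq⟩ ⟨(i' : ℕ), hq'⟩ rfl rfl hle
    have : 0 < S i ⟨(i : ℕ), hq⟩ := lt_of_lt_of_le hpos this
    simp only [hd_def, dif_pos hq]
    exact ne_of_gt this
  have key : ∀ i : Fin m, d i ≠ 0 ↔ (i : ℕ) < n := by
    intro i
    constructor
    · intro h
      have hsub : Finset.Iic i ⊆ Finset.univ.filter (fun j : Fin m => d j ≠ 0) := by
        intro j hj
        exact Finset.mem_filter.mpr ⟨Finset.mem_univ _, hmono j i (Finset.mem_Iic.mp hj) h⟩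
      have := Finset.card_le_card hsub
      rw [Fin.card_Iic, hcardF] at this
      omega
    · intro h
      by_contra hz
      have hsub : Finset.univ.filter (fun j : Fin m => d j ≠ 0) ⊆ Finset.Iio i := by
        intro j hj
        rw [Finset.mem_Iio]
        by_contra hji
        exact hmono i j (le_of_not_gt hji) (Finset.mem_filter.mp hj).2 hz
      have := Finset.card_le_card hsub
      rw [Fin.card_Iio, hcardF] at this
      omega
  -- part 1
  have part1 : ∀ (i : Fin m) (j : Fin q), (i : ℕ) = (j : ℕ) → (0 < S i j ↔ (i : ℕ) < n) := by
    intro i j hij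
    have hq : (i : ℕ) < q := hij ▸ j.isLt
    have hdi : d i = S i j := by
      simp only [hd_def, dif_pos hq]
      congr 1
      exact Fin.ext hij
    rw [← key i, hdi]
    constructor
    · exact ne_of_gt
    · intro h
      exact lt_of_le_of_ne (hSnn i j hij) (Ne.symm h)
  refine ⟨part1, ?_⟩
  -- part 2
  set c₁ : Fin n → Fin m := Fin.castLE hnm with hc₁
  set c₂ : Fin n → Fin q := Fin.castLE hnq with hc₂
  set s : Fin n → ℝ := fun a => S (c₁ a) (c₂ a) with hs
  set A : Matrix (Fin n) (Fin n) ℝ :=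
    Matrix.of (fun a b : Fin n => Real.sqrt (S (c₁ a) (c₂ b))) with hA_def
  have hA : A = Matrix.diagonal (fun a => Real.sqrt (s a)) := by
    ext a b
    by_cases hab : a = b
    · subst hab
      simp only [hA_def, Matrix.of_apply, Matrix.diagonal_apply_eq, hs]
    · have : ((c₁ a : Fin m) : ℕ) ≠ ((c₂ b : Fin q) : ℕ) := by
        simp only [hc₁, hc₂, Fin.coe_castLE]
        exact fun h => hab (Fin.ext h)
      simp [hA_def, Matrix.diagonal_apply_ne _ hab, hSdiag _ _ this]
  have hAA : A * A = Matrix.diagonal s := by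
    rw [hA, Matrix.diagonal_mul_diagonal]
    have hss : (fun a => Real.sqrt (s a) * Real.sqrt (s a)) = s :=
      funext fun a => Real.mul_self_sqrt (hSnn (c₁ a) (c₂ a) rfl)
    rw [hss]
  -- sum reduction lemma
  have key2 : ∀ (f : Fin m → Fin q → ℝ),
      (∀ k l, f k l ≠ 0 → ∃ a : Fin n, k = c₁ a ∧ l = c₂ a) →
      ∑ k, ∑ l, f k l = ∑ a, f (c₁ a) (c₂ a) := by
    intro f hf
    have hinj : ∀ a ∈ Finset.univ, ∀ b ∈ Finset.univ,
        (fun a : Fin n => ((c₁ a, c₂ a) : Fin m × Fin q)) a =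
        (fun a : Fin n => ((c₁ a, c₂ a) : Fin m × Fin q)) b → a = b := by
      intro a _ b _ hab
      have := congrArg Prod.fst hab
      simp only [hc₁] at this
      exact Fin.castLE_injective hnm this
    calc ∑ k, ∑ l, f k l
        = ∑ p ∈ Finset.univ ×ˢ Finset.univ, f p.1 p.2 := (Finset.sum_product' ..).symm
      _ = ∑ p ∈ Finset.univ.image (fun a : Fin n => ((c₁ a, c₂ a) : Fin m × Fin q)),
            f p.1 p.2 := by
          refine (Finset.sum_subset (Finset.subset_univ _ |>.trans (by
            rw [Finset.univ_product_univ])) ?_).symm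
          intro p _ hp
          by_contra hfp
          obtain ⟨a, ha1, ha2⟩ := hf p.1 p.2 hfp
          exact hp (Finset.mem_image.mpr ⟨a, Finset.mem_univ _, by
            rw [← ha1, ← ha2]⟩)
      _ = ∑ a, f (c₁ a) (c₂ a) := Finset.sum_image hinj
  have hmid : U.submatrix id c₁ * Matrix.diagonal s * (V.submatrix id c₂)ᵀ = U * S * Vᵀ := by
    ext i j
    have hL : (U.submatrix id c₁ * Matrix.diagonal s * (V.submatrix id c₂)ᵀ) i j
        = ∑ a, U i (c₁ a) * S (c₁ a) (c₂ a) * V j (c₂ a) := by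
      rw [Matrix.mul_apply]
      refine Finset.sum_congr rfl ?_
      intro a _
      rw [Matrix.transpose_apply, Matrix.mul_diagonal]
      simp [Matrix.submatrix_apply, hs]
    have hR : (U * S * Vᵀ) i j = ∑ k, ∑ l, U i k * S k l * V j l := by
      simp only [Matrix.mul_apply, Matrix.transpose_apply, Finset.sum_mul]
      rw [Finset.sum_comm]
    rw [hL, hR]
    refine (key2 (fun k l => U i k * S k l * V j l) ?_).symm
    intro k l hkl
    have hkl' : U i k * S k l * V j l ≠ 0 := hkl
    have hS0 : S k l ≠ 0 := by
      intro h; exact hkl' (by rw [h]; ring)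
    have hkleq : (k : ℕ) = (l : ℕ) := by
      by_contra h
      exact hS0 (hSdiag k l h)
    have hpos : 0 < S k l := lt_of_le_of_ne (hSnn k l hkleq) (Ne.symm hS0)
    have hkn : (k : ℕ) < n := (part1 k l hkleq).mp hpos
    exact ⟨⟨(k : ℕ), hkn⟩, Fin.ext (by simp [hc₁]), Fin.ext (by simp [hc₂, ← hkleq])⟩
  have expand : (W₁⁻¹ * U.submatrix id c₁ * A) * (A * (V.submatrix id c₂)ᵀ * W₂⁻¹)
      = W₁⁻¹ * (U.submatrix id c₁ * (A * A) * (V.submatrix id c₂)ᵀ) * W₂⁻¹ := by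
    simp only [Matrix.mul_assoc]
  rw [expand, hAA, hmid, ← hSVD]
  rw [show W₁⁻¹ * (W₁ * H * W₂) * W₂⁻¹ = (W₁⁻¹ * W₁) * (H * (W₂ * W₂⁻¹)) by
    simp only [Matrix.mul_assoc]]
  rw [Matrix.nonsing_inv_mul _ hW₁d, Matrix.mul_nonsing_inv _ hW₂d, Matrix.one_mul,
    Matrix.mul_one]
end

section
/- Kronecker factorization of the parameter-varying observability product: Let P be a set, let ψ⁰, …, ψ^{n_ψ} : P → ℝ, and for p ∈ P write ψ(p) = [ψ⁰(p), …, ψ^{n_ψ}(p)] ∈ ℝ^{1×(1+n_ψ)}. Let A(p) = ∑_{i=0}^{n_ψ} A_i ψ^i(p) with A_i ∈ ℝ^{n×n} and C(p) = ∑_{i=0}^{n_ψ} C_i ψ^i(p) with C_i ∈ ℝ^{m×n}. Define recursively 𝙾₁ = [C₀ᵀ, …, C_{n_ψ}ᵀ]ᵀ ∈ ℝ^{m(1+n_ψ)×n} and 𝙾_k = [(𝙾_{k−1}A₀)ᵀ, …, (𝙾_{k−1}A_{n_ψ})ᵀ]ᵀ for k ≥ 2. Then for every k ≥ 1 and every sequence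 p₀, p₁, …, p_{k−1} ∈ P, C(p_{k−1})·A(p_{k−2})·⋯·A(p₀) = (ψ(p₀) ⊗ ψ(p₁) ⊗ ⋯ ⊗ ψ(p_{k−1}) ⊗ I_m)·𝙾_k. -/
open Matrix

/-- Index type of the `k`-fold Kronecker product
`ψ(p₀) ⊗ ψ(p₁) ⊗ ⋯ ⊗ ψ(p_{k−1}) ⊗ I_m` (column index), which is also the row index
type of the stacked observability matrix `𝙾_k`: `KronIdx m nψ 0 = Fin m` and
`KronIdx m nψ (k+1) = Fin (nψ+1) × KronIdx m nψ k`. -/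
def KronIdx (m nψ : ℕ) : ℕ → Type
  | 0 => Fin m
  | k + 1 => Fin (nψ + 1) × KronIdx m nψ k

instance instFintypeKronIdx (m nψ : ℕ) : ∀ k, Fintype (KronIdx m nψ k)
  | 0 => inferInstanceAs (Fintype (Fin m))
  | k + 1 =>
    letI := instFintypeKronIdx m nψ k
    inferInstanceAs (Fintype (Fin (nψ + 1) × KronIdx m nψ k))

/-- The row-selector Kronecker product
`ψ(p₀) ⊗ ψ(p₁) ⊗ ⋯ ⊗ ψ(p_k) ⊗ I_m ∈ ℝ^{m × m(1+nψ)^{k+1}}`, where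
`ψ(p) = [ψ⁰(p), …, ψ^{nψ}(p)]` is a row vector. -/
noncomputable def kronRow {P : Type*} {m nψ : ℕ} (ψ : P → Fin (nψ + 1) → ℝ) :
    (k : ℕ) → (Fin (k + 1) → P) → Matrix (Fin m) (KronIdx m nψ (k + 1)) ℝ
  | 0, ps => Matrix.of fun (i : Fin m) (jc : Fin (nψ + 1) × Fin m) =>
      ψ (ps 0) jc.1 * (if i = jc.2 then (1 : ℝ) else 0)
  | k + 1, ps => Matrix.of fun (i : Fin m) (jc : Fin (nψ + 1) × KronIdx m nψ (k + 1)) =>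
      ψ (ps 0) jc.1 * kronRow ψ k (fun l => ps l.succ) i jc.2

/-- The stacked extended observability matrices:
`obsMat Cmat Amat 0 = 𝙾₁ = [C₀ᵀ, …, C_{nψ}ᵀ]ᵀ` and
`obsMat Cmat Amat k = 𝙾_{k+1} = [(𝙾_k A₀)ᵀ, …, (𝙾_k A_{nψ})ᵀ]ᵀ`. -/
noncomputable def obsMat {m n nψ : ℕ}
    (Cmat : Fin (nψ + 1) → Matrix (Fin m) (Fin n) ℝ)
    (Amat : Fin (nψ + 1) → Matrix (Fin n) (Fin n) ℝ) :
    (k : ℕ) → Matrix (KronIdx m nψ (k + 1)) (Fin n) ℝ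
  | 0 => Matrix.of fun (rc : Fin (nψ + 1) × Fin m) c => Cmat rc.1 rc.2 c
  | k + 1 => Matrix.of fun (rc : Fin (nψ + 1) × KronIdx m nψ (k + 1)) c =>
      (obsMat Cmat Amat k * Amat rc.1) rc.2 c

/-- The product `C(p_k)·A(p_{k−1})·⋯·A(p₀)`; for `k = 0` it reduces to `C(p₀)`. -/
noncomputable def prodCA {P : Type*} {m n : ℕ}
    (Cfun : P → Matrix (Fin m) (Fin n) ℝ) (Afun : P → Matrix (Fin n) (Fin n) ℝ) :
    (k : ℕ) → (Fin (k + 1) → P) → Matrix (Fin m) (Fin n) ℝ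
  | 0, ps => Cfun (ps 0)
  | k + 1, ps => prodCA Cfun Afun k (fun l => ps l.succ) * Afun (ps 0)

lemma sum_kronIdx_succ {m nψ k : ℕ} (f : KronIdx m nψ (k + 1) → ℝ) :
    ∑ x, f x = ∑ j : Fin (nψ + 1), ∑ r : KronIdx m nψ k, f (j, r) := by
  erw [← Fintype.sum_prod_type]
  rfl

lemma kron_mul_apply {m n nψ k : ℕ} (A : Matrix (Fin m) (KronIdx m nψ (k + 1)) ℝ)
    (B : Matrix (KronIdx m nψ (k + 1)) (Fin n) ℝ) (i : Fin m) (c : Fin n) :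
    (A * B) i c = ∑ j : Fin (nψ + 1), ∑ r : KronIdx m nψ k, A i (j, r) * B (j, r) c :=
  (Matrix.mul_apply).trans (sum_kronIdx_succ _)

lemma kronRow_succ_apply {P : Type*} {m nψ k : ℕ} (ψ : P → Fin (nψ + 1) → ℝ)
    (ps : Fin (k + 1 + 1) → P) (i : Fin m) (j : Fin (nψ + 1)) (r : KronIdx m nψ (k + 1)) :
    kronRow ψ (k + 1) ps i (j, r) = ψ (ps 0) j * kronRow ψ k (fun l => ps l.succ) i r := rfl

lemma obsMat_succ_apply {m n nψ k : ℕ} (Cmat : Fin (nψ + 1) → Matrix (Fin m) (Fin n) ℝ)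
    (Amat : Fin (nψ + 1) → Matrix (Fin n) (Fin n) ℝ) (j : Fin (nψ + 1))
    (r : KronIdx m nψ (k + 1)) (c : Fin n) :
    obsMat Cmat Amat (k + 1) (j, r) c = ∑ x, obsMat Cmat Amat k r x * Amat j x c := rfl

/-- **Kronecker factorization of the parameter-varying observability product.**
With `A(p) = ∑_{i} A_i ψ^i(p)` and `C(p) = ∑_{i} C_i ψ^i(p)`, for every `k ≥ 1` and
scheduling points `p₀, …, p_{k−1}` one has
`C(p_{k−1})·A(p_{k−2})·⋯·A(p₀) = (ψ(p₀) ⊗ ψ(p₁) ⊗ ⋯ ⊗ ψ(p_{k−1}) ⊗ I_m)·𝙾_k`. -/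
theorem kronecker_observability_factorization {P : Type*} {m n nψ : ℕ}
    (ψ : P → Fin (nψ + 1) → ℝ)
    (Amat : Fin (nψ + 1) → Matrix (Fin n) (Fin n) ℝ)
    (Cmat : Fin (nψ + 1) → Matrix (Fin m) (Fin n) ℝ)
    (k : ℕ) (ps : Fin (k + 1) → P) :
    prodCA (fun p => ∑ i, ψ p i • Cmat i) (fun p => ∑ i, ψ p i • Amat i) k ps
      = kronRow ψ k ps * obsMat Cmat Amat k := by
  induction k with
  | zero =>
    ext i c
    erw [kron_mul_apply]
    change (∑ x, ψ (ps 0) x • Cmat x) i c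
      = ∑ j, ∑ r, (ψ (ps 0) j * if i = r then (1 : ℝ) else 0) * Cmat j r c
    simp [Matrix.sum_apply, mul_comm]
  | succ k ih =>
    have ih' : ∀ (ps : Fin (k + 1) → P) (i : Fin m) (x : Fin n),
        prodCA (fun p => ∑ i, ψ p i • Cmat i) (fun p => ∑ i, ψ p i • Amat i) k ps i x
          = ∑ y, kronRow ψ k ps i y * obsMat Cmat Amat k y x :=
      fun ps i x => (congrFun (congrFun (ih ps) i) x).trans Matrix.mul_apply
    ext i c
    erw [kron_mul_apply]
    simp only [prodCA, ih', kronRow_succ_apply, obsMat_succ_apply, Matrix.of_apply, Matrix.mul_apply,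
      Matrix.sum_apply, Matrix.smul_apply, smul_eq_mul, Finset.mul_sum,
      Finset.sum_mul]
    rw [Finset.sum_comm]
    refine Finset.sum_congr rfl fun j _ => ?_
    rw [Finset.sum_comm]
    refine Finset.sum_congr rfl fun b _ => ?_
    refine Finset.sum_congr rfl fun r _ => ?_
    ring
end
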